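/- arXiv:2403.18669 — 5 statements merged into one kernel-verified Lean document; each statement's English description precedes it below -/
import Mathlib

section
/- For every n ≥ 1 and all x > 0, the function B_n(x) := (1/h_{n−1}) ∫₀^∞ [(v'(x) − v'(y))/(x − y)] P_n(y;t) P_{n−1}(y;t) w(y;t) dy admits the explicit expression B_n(x) = 3β_n + r_n/x + r_n*/x², where r_n := 3(α_n + α_{n−1})β_n − n and r_n* := (t/h_{n−1}) ∫₀^∞ y⁻¹ P_n(y;t) P_{n−1}(y;t) w(y;t) dy. -/
open MeasureTheory Polynomial Real Filter Set Topology

lemma exp_bound (t : ℝ) (ht : 0 < t) (k : ℕ) (hk : 1 ≤ k) (y : ℝ) (hy : 0 < y) :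
    Real.exp (-t / y) ≤ ((k : ℝ) / t) ^ k * y ^ k := by
  have hk' : (0 : ℝ) < k := by exact_mod_cast hk
  have h1 : t / (k * y) ≤ Real.exp (t / (k * y)) :=
    le_trans (by linarith) (Real.add_one_le_exp _)
  have h2 : Real.exp (-(t / (k * y))) ≤ k * y / t := by
    rw [Real.exp_neg]
    rw [inv_le_comm₀ (Real.exp_pos _) (by positivity)]
    calc (k * y / t)⁻¹ = t / (k * y) := by field_simp
    _ ≤ Real.exp (t / (k * y)) := h1
  have h3 : Real.exp (-t / y) = Real.exp (-(t / (k * y))) ^ k := by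
    rw [← Real.exp_nat_mul]
    congr 1
    field_simp
  rw [h3]
  calc Real.exp (-(t / (k * y))) ^ k ≤ (k * y / t) ^ k :=
        pow_le_pow_left₀ (Real.exp_pos _).le h2 k
    _ = ((k : ℝ) / t) ^ k * y ^ k := by rw [div_pow, mul_pow]; ring

lemma int_weight (t : ℝ) (ht : 0 < t) (s : ℝ) :
    IntegrableOn (fun y : ℝ => y ^ s * Real.exp (-y ^ 3 - t / y)) (Ioi 0) := by
  set k : ℕ := ⌈|s|⌉₊ + 1 with hkdef
  have hk1 : 1 ≤ k := Nat.le_add_left 1 _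
  have hsk : -1 < s + k := by
    have : |s| ≤ (⌈|s|⌉₊ : ℝ) := Nat.le_ceil _
    have h2 : -s ≤ |s| := neg_le_abs s
    push_cast [hkdef]
    linarith
  have hint : IntegrableOn (fun y : ℝ => ((k : ℝ) / t) ^ k * (y ^ (s + k) * Real.exp (-y ^ (3:ℝ)))) (Ioi 0) :=
    (integrableOn_rpow_mul_exp_neg_rpow hsk (by norm_num)).const_mul _
  apply Integrable.mono' hint
  · apply ContinuousOn.aestronglyMeasurable _ measurableSet_Ioi
    apply ContinuousOn.mul
    · intro y hy
      exact (Real.continuousAt_rpow_const y s (Or.inl (ne_of_gt hy))).continuousWithinAt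
    · apply Real.continuous_exp.comp_continuousOn
      apply ContinuousOn.sub
      · exact (continuous_pow 3).continuousOn.neg
      · exact continuousOn_const.div continuousOn_id (fun y hy => ne_of_gt hy)
  · rw [ae_restrict_iff' measurableSet_Ioi]
    filter_upwards with y
    intro hy
    have hy0 : (0:ℝ) < y := hy
    have hrs : (0:ℝ) < y ^ s := Real.rpow_pos_of_pos hy0 s
    rw [Real.norm_eq_abs, abs_mul, abs_of_pos hrs, abs_of_pos (Real.exp_pos _)]
    have e1 : Real.exp (-y ^ 3 - t / y) = Real.exp (-y ^ 3) * Real.exp (-t / y) := by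
      rw [← Real.exp_add]; ring_nf
    rw [e1]
    have e2 : y ^ (s + (k:ℝ)) = y ^ s * y ^ (k:ℕ) := by
      rw [Real.rpow_add hy0, Real.rpow_natCast]
    have e3 : y ^ ((3:ℕ):ℝ) = y ^ (3:ℕ) := Real.rpow_natCast y 3
    calc y ^ s * (Real.exp (-y ^ 3) * Real.exp (-t / y))
        ≤ y ^ s * (Real.exp (-y ^ 3) * (((k : ℝ) / t) ^ k * y ^ k)) := by
          apply mul_le_mul_of_nonneg_left _ hrs.le
          exact mul_le_mul_of_nonneg_left (exp_bound t ht k hk1 y hy0) (Real.exp_pos _).le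
      _ = ((k : ℝ) / t) ^ k * (y ^ (s + (k:ℝ)) * Real.exp (-y ^ (3:ℝ))) := by
          rw [e2]
          rw [show ((3:ℝ)) = ((3:ℕ):ℝ) by norm_num, e3]
          ring

lemma int_polyw (lam t : ℝ) (ht : 0 < t) (w : ℝ → ℝ)
    (hw : ∀ x : ℝ, 0 < x → w x = x ^ lam * Real.exp (-x ^ 3 - t / x))
    (s : ℝ) (Q : Polynomial ℝ) :
    IntegrableOn (fun y : ℝ => y ^ s * (Q.eval y * w y)) (Ioi 0) := by
  induction Q using Polynomial.induction_on' with
  | add p q hp hq =>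
      have : (fun y : ℝ => y ^ s * ((p + q).eval y * w y))
          = fun y => y ^ s * (p.eval y * w y) + y ^ s * (q.eval y * w y) := by
        funext y; simp [eval_add]; ring
      rw [this]; exact hp.add hq
  | monomial i c =>
      rw [show (fun y : ℝ => y ^ s * ((monomial i c).eval y * w y)) = _ from rfl]
      rw [integrableOn_congr_fun
        (g := fun y : ℝ => c • (y ^ (s + i + lam) * Real.exp (-y ^ 3 - t / y)))
        _ measurableSet_Ioi]
      · exact (int_weight t ht (s + i + lam)).smul c
      · intro y hy
        have hy0 : (0:ℝ) < y := hy
        simp only []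
        rw [hw y hy0]
        simp only [eval_monomial, smul_eq_mul]
        rw [show s + i + lam = s + ((i:ℝ) + lam) by ring, Real.rpow_add hy0,
          Real.rpow_add hy0, Real.rpow_natCast]
        ring

lemma int_s (lam t : ℝ) (ht : 0 < t) (w : ℝ → ℝ)
    (hw : ∀ x : ℝ, 0 < x → w x = x ^ lam * Real.exp (-x ^ 3 - t / x))
    (s : ℝ) (A B : Polynomial ℝ) :
    IntegrableOn (fun y : ℝ => y ^ s * (A.eval y * B.eval y * w y)) (Ioi 0) := by
  have := int_polyw lam t ht w hw s (A * B)
  apply this.congr_fun _ measurableSet_Ioi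
  intro y hy
  simp only [eval_mul]

lemma int_pp (lam t : ℝ) (ht : 0 < t) (w : ℝ → ℝ)
    (hw : ∀ x : ℝ, 0 < x → w x = x ^ lam * Real.exp (-x ^ 3 - t / x))
    (A B : Polynomial ℝ) :
    IntegrableOn (fun y : ℝ => A.eval y * B.eval y * w y) (Ioi 0) := by
  have := int_s lam t ht w hw 0 A B
  apply this.congr_fun _ measurableSet_Ioi
  intro y hy
  simp [Real.rpow_zero]

lemma orth_low (lam t : ℝ) (ht : 0 < t) (w : ℝ → ℝ)
    (hw : ∀ x : ℝ, 0 < x → w x = x ^ lam * Real.exp (-x ^ 3 - t / x))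
    (P : ℕ → Polynomial ℝ) (h : ℕ → ℝ)
    (hP : ∀ n, (P n).Monic ∧ (P n).natDegree = n)
    (horth : ∀ m n, ∫ x in Set.Ioi (0 : ℝ),
        (P m).eval x * (P n).eval x * w x = if m = n then h n else 0)
    (hP0 : P 0 = 1)
    (m : ℕ) (Q : Polynomial ℝ) (hQ : Q.degree < (m : ℕ)) :
    ∫ y in Ioi (0:ℝ), Q.eval y * (P m).eval y * w y = 0 := by
  have key : ∀ d : ℕ, ∀ Q : Polynomial ℝ, Q.natDegree ≤ d → Q.degree < (m:ℕ) →
      ∫ y in Ioi (0:ℝ), Q.eval y * (P m).eval y * w y = 0 := by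
    intro d
    induction d with
    | zero =>
        intro Q hQd hQm
        rcases eq_or_ne Q 0 with rfl | hQ0
        · simp
        · have hm : 0 < m := by
            by_contra hm
            push_neg at hm
            interval_cases m
            rw [Nat.cast_zero, Nat.WithBot.lt_zero_iff, degree_eq_bot] at hQm
            exact hQ0 hQm
          have hQc : Q = C (Q.coeff 0) := eq_C_of_natDegree_le_zero hQd
          have : (fun y : ℝ => Q.eval y * (P m).eval y * w y)
              = fun y => Q.coeff 0 * ((P 0).eval y * (P m).eval y * w y) := by
            funext y
            rw [hP0]
            conv_lhs => rw [hQc]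
            simp; ring
          rw [this, integral_const_mul, horth 0 m, if_neg (by omega)]
          ring
    | succ d ih =>
        intro Q hQd hQm
        rcases le_or_gt Q.natDegree d with hle | hgt
        · exact ih Q hle hQm
        have hdeg : Q.natDegree = d + 1 := le_antisymm hQd hgt
        have hQ0 : Q ≠ 0 := by
          intro hc; rw [hc] at hdeg; simp at hdeg
        have hdm : d + 1 < m := by
          have : Q.degree = (Q.natDegree : WithBot ℕ) := degree_eq_natDegree hQ0
          rw [this, hdeg] at hQm
          exact_mod_cast hQm
        set c := Q.coeff (d+1) with hc
        set R := Q - C c * P (d+1) with hR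
        have hPd : (P (d+1)).natDegree = d + 1 := (hP (d+1)).2
        have hRd : R.natDegree ≤ d := by
          rw [natDegree_le_iff_coeff_eq_zero]
          intro j hj
          rw [hR, coeff_sub, coeff_C_mul]
          rcases eq_or_lt_of_le (Nat.succ_le_of_lt hj) with hj1 | hj1
          · rw [← hj1]
            have : (P (d+1)).coeff (d+1) = 1 := by
              have := (hP (d+1)).1
              rw [Monic, leadingCoeff, hPd] at this
              exact this
            rw [this, hc]; ring
          · rw [coeff_eq_zero_of_natDegree_lt (by omega : Q.natDegree < j),
              coeff_eq_zero_of_natDegree_lt (by omega : (P (d+1)).natDegree < j)]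
            ring
        have hRm : R.degree < (m:ℕ) := by
          calc R.degree ≤ (R.natDegree : WithBot ℕ) := degree_le_natDegree
          _ ≤ (d : WithBot ℕ) := by exact_mod_cast hRd
          _ < (m : WithBot ℕ) := by exact_mod_cast (by omega : d < m)
        have hsplit : (fun y : ℝ => Q.eval y * (P m).eval y * w y)
            = fun y => R.eval y * (P m).eval y * w y
                + c * ((P (d+1)).eval y * (P m).eval y * w y) := by
          funext y
          have : Q = R + C c * P (d+1) := by rw [hR]; ring
          rw [this]
          simp; ring
        rw [hsplit, integral_add]
        · rw [ih R hRd hRm, integral_const_mul, horth (d+1) m, if_neg (by omega)]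
          ring
        · exact int_pp lam t ht w hw R (P m)
        · exact ((int_pp lam t ht w hw (P (d+1)) (P m)).const_mul c)
  exact key Q.natDegree Q le_rfl hQ

lemma poly_abs_le (Q : Polynomial ℝ) (y : ℝ) (hy0 : 0 ≤ y) (hy1 : 1 ≤ y) :
    |Q.eval y| ≤ (∑ i ∈ Finset.range (Q.natDegree + 1), |Q.coeff i|) * y ^ Q.natDegree := by
  rw [Polynomial.eval_eq_sum_range, Finset.sum_mul]
  refine le_trans (Finset.abs_sum_le_sum_abs _ _) (Finset.sum_le_sum ?_)
  intro i hi
  rw [abs_mul, abs_pow, abs_of_nonneg hy0]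
  exact mul_le_mul_of_nonneg_left
    (pow_le_pow_right₀ hy1 (Nat.lt_succ_iff.mp (Finset.mem_range.mp hi))) (abs_nonneg _)

lemma poly_abs_le_one (Q : Polynomial ℝ) (y : ℝ) (hy0 : 0 ≤ y) (hy1 : y ≤ 1) :
    |Q.eval y| ≤ ∑ i ∈ Finset.range (Q.natDegree + 1), |Q.coeff i| := by
  rw [Polynomial.eval_eq_sum_range]
  refine le_trans (Finset.abs_sum_le_sum_abs _ _) (Finset.sum_le_sum ?_)
  intro i hi
  rw [abs_mul, abs_pow, abs_of_nonneg hy0]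
  calc |Q.coeff i| * y ^ i ≤ |Q.coeff i| * 1 :=
    mul_le_mul_of_nonneg_left (pow_le_one₀ hy0 hy1) (abs_nonneg _)
  _ = |Q.coeff i| := mul_one _

lemma tendsto_top (lam t : ℝ) (ht : 0 < t) (Q : Polynomial ℝ) :
    Tendsto (fun y : ℝ => Q.eval y * (y ^ lam * Real.exp (-y ^ 3 - t / y)))
      atTop (𝓝 0) := by
  set C0 := ∑ i ∈ Finset.range (Q.natDegree + 1), |Q.coeff i| with hC0
  set M := Q.natDegree + ⌈|lam|⌉₊ with hM
  apply squeeze_zero_norm' (a := fun y : ℝ => C0 * (y ^ M * Real.exp (-y)))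
  · filter_upwards [Ici_mem_atTop (1:ℝ)] with y hy
    have hy1 : (1:ℝ) ≤ y := hy
    have hy0 : (0:ℝ) < y := lt_of_lt_of_le one_pos hy1
    rw [Real.norm_eq_abs, abs_mul, abs_mul, abs_of_pos (Real.rpow_pos_of_pos hy0 _),
      abs_of_pos (Real.exp_pos _)]
    have b1 : |Q.eval y| ≤ C0 * y ^ Q.natDegree := poly_abs_le Q y hy0.le hy1
    have b2 : y ^ lam ≤ y ^ (⌈|lam|⌉₊ : ℕ) := by
      rw [← Real.rpow_natCast y ⌈|lam|⌉₊]
      apply Real.rpow_le_rpow_of_exponent_le hy1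
      exact le_trans (le_abs_self lam) (Nat.le_ceil _)
    have b3 : Real.exp (-y ^ 3 - t / y) ≤ Real.exp (-y) := by
      apply Real.exp_le_exp.mpr
      have h1 : y ≤ y ^ 3 := le_self_pow₀ hy1 (by norm_num)
      have h2 : 0 < t / y := div_pos ht hy0
      linarith
    have hC0nn : 0 ≤ C0 := Finset.sum_nonneg fun i _ => abs_nonneg _
    calc |Q.eval y| * (y ^ lam * Real.exp (-y ^ 3 - t / y))
        ≤ (C0 * y ^ Q.natDegree) * (y ^ (⌈|lam|⌉₊ : ℕ) * Real.exp (-y)) := by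
          apply mul_le_mul b1 _ (by positivity) (by positivity)
          exact mul_le_mul b2 b3 (Real.exp_pos _).le (by positivity)
      _ = C0 * (y ^ M * Real.exp (-y)) := by rw [hM, pow_add]; ring
  · have := (tendsto_pow_mul_exp_neg_atTop_nhds_zero M).const_mul C0
    simpa using this

lemma tendsto_bot (lam t : ℝ) (hlam : -1 < lam) (ht : 0 < t) (Q : Polynomial ℝ) :
    Tendsto (fun y : ℝ => Q.eval y * (y ^ lam * Real.exp (-y ^ 3 - t / y)))
      (𝓝[>] (0:ℝ)) (𝓝 0) := by
  set C0 := ∑ i ∈ Finset.range (Q.natDegree + 1), |Q.coeff i| with hC0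
  set k : ℕ := ⌈|lam|⌉₊ + 2 with hk
  have hC0nn : 0 ≤ C0 := Finset.sum_nonneg fun i _ => abs_nonneg _
  have hlk : 1 ≤ lam + k := by
    have h1 : -lam ≤ |lam| := neg_le_abs lam
    have h2 : |lam| ≤ (⌈|lam|⌉₊:ℝ) := Nat.le_ceil _
    push_cast [hk]
    linarith
  apply squeeze_zero_norm' (a := fun y : ℝ => (C0 * ((k:ℝ)/t) ^ k) * y)
  · filter_upwards [Ioc_mem_nhdsGT_of_mem (Set.mem_Ico.mpr ⟨le_rfl, one_pos⟩)] with y hy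
    obtain ⟨hy0, hy1⟩ := hy
    rw [Real.norm_eq_abs, abs_mul, abs_mul, abs_of_pos (Real.rpow_pos_of_pos hy0 _),
      abs_of_pos (Real.exp_pos _)]
    have b1 : |Q.eval y| ≤ C0 := poly_abs_le_one Q y hy0.le hy1
    have b2 : Real.exp (-y ^ 3 - t / y) ≤ ((k:ℝ)/t) ^ k * y ^ k := by
      calc Real.exp (-y ^ 3 - t / y) ≤ Real.exp (-t / y) := by
            apply Real.exp_le_exp.mpr
            have : 0 < y ^ 3 := by positivity
            rw [neg_div]
            linarith
      _ ≤ ((k:ℝ)/t) ^ k * y ^ k := exp_bound t ht k (by omega) y hy0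
    have b3 : y ^ lam * y ^ (k:ℕ) ≤ y := by
      rw [← Real.rpow_natCast y k, ← Real.rpow_add hy0]
      calc y ^ (lam + (k:ℝ)) ≤ y ^ (1:ℝ) :=
        Real.rpow_le_rpow_of_exponent_ge hy0 hy1 hlk
      _ = y := Real.rpow_one y
    calc |Q.eval y| * (y ^ lam * Real.exp (-y ^ 3 - t / y))
        ≤ C0 * (y ^ lam * (((k:ℝ)/t) ^ k * y ^ k)) := by
          apply mul_le_mul b1 _ (by positivity) hC0nn
          exact mul_le_mul_of_nonneg_left b2 (Real.rpow_pos_of_pos hy0 _).le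
      _ = (C0 * ((k:ℝ)/t) ^ k) * (y ^ lam * y ^ (k:ℕ)) := by ring
      _ ≤ (C0 * ((k:ℝ)/t) ^ k) * y := by
          apply mul_le_mul_of_nonneg_left b3 (by positivity)
  · have h2 : Continuous (fun y : ℝ => (C0 * ((k:ℝ)/t) ^ k) * y) :=
      continuous_const.mul continuous_id
    have h3 := h2.tendsto (0:ℝ)
    rw [mul_zero] at h3
    exact h3.mono_left nhdsWithin_le_nhds

lemma wE_deriv (lam t : ℝ) (y : ℝ) (hy : 0 < y) :
    HasDerivAt (fun z : ℝ => z ^ lam * Real.exp (-z ^ 3 - t / z))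
      ((y ^ lam * Real.exp (-y ^ 3 - t / y)) * (lam / y - 3 * y ^ 2 + t / y ^ 2)) y := by
  have h1 : HasDerivAt (fun z : ℝ => z ^ lam) (lam * y ^ (lam - 1)) y :=
    Real.hasDerivAt_rpow_const (Or.inl (ne_of_gt hy))
  have h2 : HasDerivAt (fun z : ℝ => -z ^ 3 - t / z) (-(3 * y ^ 2) - (-t / y ^ 2)) y := by
    have ha : HasDerivAt (fun z : ℝ => -z ^ 3) (-(3 * y ^ 2)) y := by
      refine (hasDerivAt_pow 3 y).neg.congr_deriv ?_
      norm_num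
    have hb : HasDerivAt (fun z : ℝ => t / z) (-t / y ^ 2) y := by
      have := (hasDerivAt_inv (ne_of_gt hy)).const_mul t
      have e : (fun z : ℝ => t * z⁻¹) = fun z : ℝ => t / z := by
        funext z; rw [div_eq_mul_inv]
      rw [e] at this
      refine this.congr_deriv ?_
      ring
    exact ha.sub hb
  have h3 : HasDerivAt (fun z : ℝ => Real.exp (-z ^ 3 - t / z))
      (Real.exp (-y ^ 3 - t / y) * (-(3 * y ^ 2) - (-t / y ^ 2))) y := by
    have := h2.exp
    simpa [mul_comm] using this
  have h4 := h1.mul h3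
  refine h4.congr_deriv ?_
  have hrs : y ^ (lam - 1) = y ^ lam / y := by
    rw [Real.rpow_sub hy, Real.rpow_one]
  rw [hrs]
  field_simp
  ring

lemma ibp_int (lam t : ℝ) (hlam : -1 < lam) (ht : 0 < t) (A : Polynomial ℝ) :
    IntegrableOn (fun y : ℝ => A.eval y *
      ((y ^ lam * Real.exp (-y ^ 3 - t / y)) * (lam / y - 3 * y ^ 2 + t / y ^ 2)))
      (Ioi 0) := by
  set wE : ℝ → ℝ := fun y => y ^ lam * Real.exp (-y ^ 3 - t / y) with hwE
  have hwE' : ∀ x : ℝ, 0 < x → wE x = x ^ lam * Real.exp (-x ^ 3 - t / x) := fun x _ => rfl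
  have i1 := ((int_polyw lam t ht wE hwE' (-1) A).const_mul lam)
  have i2 := ((int_polyw lam t ht wE hwE' 2 A).const_mul (-3))
  have i3 := ((int_polyw lam t ht wE hwE' (-2) A).const_mul t)
  have isum : IntegrableOn (fun y : ℝ => lam * (y ^ (-1:ℝ) * (A.eval y * wE y))
      + (-3) * (y ^ (2:ℝ) * (A.eval y * wE y)) + t * (y ^ (-2:ℝ) * (A.eval y * wE y)))
      (Ioi 0) := (i1.add i2).add i3
  apply isum.congr_fun _ measurableSet_Ioi
  intro y hy
  have hy0 : (0:ℝ) < y := hy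
  have e1 : y ^ (-1:ℝ) = y⁻¹ := Real.rpow_neg_one y
  have e2 : y ^ (2:ℝ) = y ^ (2:ℕ) := by
    rw [show ((2:ℝ)) = ((2:ℕ):ℝ) by norm_num, Real.rpow_natCast]
  have e3 : y ^ (-2:ℝ) = (y ^ (2:ℕ))⁻¹ := by
    rw [show ((-2:ℝ)) = -((2:ℕ):ℝ) by norm_num, Real.rpow_neg hy0.le, Real.rpow_natCast]
  simp only [e1, e2, e3, div_eq_mul_inv, hwE]
  ring

lemma ibp (lam t : ℝ) (hlam : -1 < lam) (ht : 0 < t) (A : Polynomial ℝ) :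
    ∫ y in Ioi (0:ℝ), (A.derivative.eval y * (y ^ lam * Real.exp (-y ^ 3 - t / y))
      + A.eval y * ((y ^ lam * Real.exp (-y ^ 3 - t / y)) * (lam / y - 3 * y ^ 2 + t / y ^ 2)))
      = 0 := by
  set wE : ℝ → ℝ := fun y => y ^ lam * Real.exp (-y ^ 3 - t / y) with hwE
  have hwE' : ∀ x : ℝ, 0 < x → wE x = x ^ lam * Real.exp (-x ^ 3 - t / x) := fun x _ => rfl
  have hu : ∀ y ∈ Ioi (0:ℝ), HasDerivAt (fun z : ℝ => A.eval z) (A.derivative.eval y) y :=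
    fun y _ => A.hasDerivAt y
  have hv : ∀ y ∈ Ioi (0:ℝ), HasDerivAt wE (wE y * (lam / y - 3 * y ^ 2 + t / y ^ 2)) y :=
    fun y hy => wE_deriv lam t y hy
  have huv : IntegrableOn ((fun z : ℝ => A.derivative.eval z) * wE
      + (fun z : ℝ => A.eval z) * (fun y => wE y * (lam / y - 3 * y ^ 2 + t / y ^ 2)))
      (Ioi 0) := by
    have i1 : IntegrableOn (fun y : ℝ => A.derivative.eval y * wE y) (Ioi 0) := by
      apply (int_polyw lam t ht wE hwE' 0 A.derivative).congr_fun _ measurableSet_Ioi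
      intro y hy
      simp [Real.rpow_zero]
    exact i1.add (ibp_int lam t hlam ht A)
  have hz : Tendsto ((fun z : ℝ => A.eval z) * wE) (𝓝[>] (0:ℝ)) (𝓝 0) :=
    tendsto_bot lam t hlam ht A
  have hi : Tendsto ((fun z : ℝ => A.eval z) * wE) atTop (𝓝 0) :=
    tendsto_top lam t ht A
  have := integral_Ioi_deriv_mul_eq_sub hu hv huv hz hi
  rw [this]
  ring

theorem my_integral_add3 {μ : Measure ℝ} {f g k : ℝ → ℝ} (hf : Integrable f μ)
    (hg : Integrable g μ) (hk : Integrable k μ) :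
    ∫ y, f y + g y + k y ∂μ = (∫ y, f y ∂μ) + (∫ y, g y ∂μ) + (∫ y, k y ∂μ) := by
  have h1 := integral_add (hf.add hg) hk
  simp only [Pi.add_apply] at h1
  rw [h1, integral_add hf hg]

theorem my_integral_add4 {μ : Measure ℝ} {f g k l : ℝ → ℝ} (hf : Integrable f μ)
    (hg : Integrable g μ) (hk : Integrable k μ) (hl : Integrable l μ) :
    ∫ y, f y + g y + k y + l y ∂μ
      = (∫ y, f y ∂μ) + (∫ y, g y ∂μ) + (∫ y, k y ∂μ) + (∫ y, l y ∂μ) := by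
  have h1 := integral_add ((hf.add hg).add hk) hl
  simp only [Pi.add_apply] at h1
  rw [h1, my_integral_add3 hf hg hk]

theorem my_integral_add5 {μ : Measure ℝ} {f g k l p : ℝ → ℝ} (hf : Integrable f μ)
    (hg : Integrable g μ) (hk : Integrable k μ) (hl : Integrable l μ) (hp : Integrable p μ) :
    ∫ y, f y + g y + k y + l y + p y ∂μ
      = (∫ y, f y ∂μ) + (∫ y, g y ∂μ) + (∫ y, k y ∂μ) + (∫ y, l y ∂μ) + (∫ y, p y ∂μ) := by
  have h1 := integral_add (((hf.add hg).add hk).add hl) hp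
  simp only [Pi.add_apply] at h1
  rw [h1, my_integral_add4 hf hg hk hl]

theorem stmt_1
    (lam t : ℝ) (hlam : -1 < lam) (ht : 0 < t)
    (w : ℝ → ℝ)
    (hw : ∀ x : ℝ, 0 < x → w x = x ^ lam * Real.exp (-x ^ 3 - t / x))
    (P : ℕ → Polynomial ℝ) (h : ℕ → ℝ) (α β : ℕ → ℝ)
    (hP : ∀ n, (P n).Monic ∧ (P n).natDegree = n)
    (hpos : ∀ n, 0 < h n)
    (horth : ∀ m n, ∫ x in Set.Ioi (0 : ℝ),
        (P m).eval x * (P n).eval x * w x = if m = n then h n else 0)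
    (hP0 : P 0 = 1)
    (hrec : ∀ n, 1 ≤ n → ∀ x : ℝ, x * (P n).eval x
        = (P (n + 1)).eval x + α n * (P n).eval x + β n * (P (n - 1)).eval x)
    (hrec0 : ∀ x : ℝ, x * (P 0).eval x = (P 1).eval x + α 0 * (P 0).eval x)
    : ∀ n : ℕ, 1 ≤ n → ∀ x : ℝ, 0 < x →
      (1 / h (n - 1)) * (∫ y in Set.Ioi (0 : ℝ),
          (((3 * x ^ 2 - lam / x - t / x ^ 2) - (3 * y ^ 2 - lam / y - t / y ^ 2)) / (x - y))
            * (P n).eval y * (P (n - 1)).eval y * w y)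
        = 3 * β n + (3 * (α n + α (n - 1)) * β n - (n : ℝ)) / x
            + ((t / h (n - 1)) * ∫ y in Set.Ioi (0 : ℝ),
                y⁻¹ * (P n).eval y * (P (n - 1)).eval y * w y) / x ^ 2 := by
  intro n hn x hx
  obtain ⟨m, rfl⟩ : ∃ m, n = m + 1 := ⟨n - 1, (Nat.succ_pred_eq_of_pos hn).symm⟩
  simp only [Nat.add_sub_cancel]
  -- integrability wrappers
  have ipp : ∀ A B : Polynomial ℝ,
      IntegrableOn (fun y : ℝ => A.eval y * B.eval y * w y) (Ioi 0) :=
    int_pp lam t ht w hw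
  have iY : ∀ A B : Polynomial ℝ,
      IntegrableOn (fun y : ℝ => y * (A.eval y * B.eval y * w y)) (Ioi 0) := by
    intro A B
    apply (int_s lam t ht w hw 1 A B).congr_fun _ measurableSet_Ioi
    intro y hy; simp [Real.rpow_one]
  have iY2 : ∀ A B : Polynomial ℝ,
      IntegrableOn (fun y : ℝ => y ^ 2 * (A.eval y * B.eval y * w y)) (Ioi 0) := by
    intro A B
    apply (int_s lam t ht w hw 2 A B).congr_fun _ measurableSet_Ioi
    intro y hy
    have e : y ^ (2:ℝ) = y ^ (2:ℕ) := by
      rw [show ((2:ℝ)) = ((2:ℕ):ℝ) by norm_num, Real.rpow_natCast]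
    simp [e]
  have iInv : ∀ A B : Polynomial ℝ,
      IntegrableOn (fun y : ℝ => y⁻¹ * (A.eval y * B.eval y * w y)) (Ioi 0) := by
    intro A B
    apply (int_s lam t ht w hw (-1) A B).congr_fun _ measurableSet_Ioi
    intro y hy; simp [Real.rpow_neg_one]
  have iInv2 : ∀ A B : Polynomial ℝ,
      IntegrableOn (fun y : ℝ => (y ^ 2)⁻¹ * (A.eval y * B.eval y * w y)) (Ioi 0) := by
    intro A B
    apply (int_s lam t ht w hw (-2) A B).congr_fun _ measurableSet_Ioi
    intro y hy
    have hy0 : (0:ℝ) < y := hy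
    have e : y ^ (-2:ℝ) = (y ^ (2:ℕ))⁻¹ := by
      rw [show ((-2:ℝ)) = -((2:ℕ):ℝ) by norm_num, Real.rpow_neg hy0.le, Real.rpow_natCast]
    simp [e]
  -- basic orthogonality values
  have hI0 : ∫ y in Ioi (0:ℝ), (P (m+1)).eval y * (P m).eval y * w y = 0 := by
    rw [horth (m+1) m, if_neg (by omega)]
  have hI1 : ∫ y in Ioi (0:ℝ), y * ((P (m+1)).eval y * (P m).eval y * w y)
      = β (m+1) * h m := by
    have hsplit : (fun y : ℝ => y * ((P (m+1)).eval y * (P m).eval y * w y))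
        = fun y : ℝ => (P (m+2)).eval y * (P m).eval y * w y
          + α (m+1) * ((P (m+1)).eval y * (P m).eval y * w y)
          + β (m+1) * ((P m).eval y * (P m).eval y * w y) := by
      funext y
      have hr := hrec (m+1) (by omega) y
      simp only [Nat.add_sub_cancel] at hr
      linear_combination ((P m).eval y * w y) * hr
    rw [hsplit, my_integral_add3 (ipp _ _) ((ipp _ _).const_mul _) ((ipp _ _).const_mul _),
      integral_const_mul, integral_const_mul,
      horth (m+2) m, horth (m+1) m, horth m m,
      if_neg (by omega), if_neg (by omega), if_pos rfl]
    ring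
  have hyBB : ∫ y in Ioi (0:ℝ), y * ((P m).eval y * (P m).eval y * w y)
      = α m * h m := by
    rcases Nat.eq_zero_or_pos m with rfl | hm
    · have hsplit : (fun y : ℝ => y * ((P 0).eval y * (P 0).eval y * w y))
          = fun y : ℝ => (P 1).eval y * (P 0).eval y * w y
            + α 0 * ((P 0).eval y * (P 0).eval y * w y) := by
        funext y
        linear_combination ((P 0).eval y * w y) * hrec0 y
      have h1 := integral_add (μ := volume.restrict (Ioi 0)) (ipp (P 1) (P 0))
        ((ipp (P 0) (P 0)).const_mul (α 0))
      rw [hsplit, h1, integral_const_mul, horth 1 0, horth 0 0, if_neg (by omega), if_pos rfl]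
      ring
    · have hsplit : (fun y : ℝ => y * ((P m).eval y * (P m).eval y * w y))
          = fun y : ℝ => (P (m+1)).eval y * (P m).eval y * w y
            + α m * ((P m).eval y * (P m).eval y * w y)
            + β m * ((P (m-1)).eval y * (P m).eval y * w y) := by
        funext y
        have hr := hrec m hm y
        linear_combination ((P m).eval y * w y) * hr
      rw [hsplit, my_integral_add3 (ipp _ _) ((ipp _ _).const_mul _) ((ipp _ _).const_mul _),
        integral_const_mul, integral_const_mul,
        horth (m+1) m, horth m m, horth (m-1) m,
        if_neg (by omega), if_pos rfl, if_neg (by omega)]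
      ring
  have hXPm : ∫ y in Ioi (0:ℝ), y * ((P (m+2)).eval y * (P m).eval y * w y) = 0 := by
    have heq : EqOn (fun y : ℝ => y * ((P (m+2)).eval y * (P m).eval y * w y))
        (fun y : ℝ => (X * P m).eval y * (P (m+2)).eval y * w y) (Ioi 0) := by
      intro y hy
      simp only [eval_mul, eval_X]
      ring
    rw [setIntegral_congr_fun measurableSet_Ioi heq]
    apply orth_low lam t ht w hw P h hP horth hP0 (m+2)
    calc (X * P m).degree ≤ ((X * P m).natDegree : WithBot ℕ) := degree_le_natDegree
      _ ≤ ((1 + m : ℕ) : WithBot ℕ) := by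
          exact_mod_cast le_trans natDegree_mul_le (by rw [natDegree_X, (hP m).2])
      _ < ((m + 2 : ℕ) : WithBot ℕ) := by exact_mod_cast (by omega : 1 + m < m + 2)
  have hI2 : ∫ y in Ioi (0:ℝ), y ^ 2 * ((P (m+1)).eval y * (P m).eval y * w y)
      = (α (m+1) + α m) * β (m+1) * h m := by
    have hsplit : (fun y : ℝ => y ^ 2 * ((P (m+1)).eval y * (P m).eval y * w y))
        = fun y : ℝ => y * ((P (m+2)).eval y * (P m).eval y * w y)
          + α (m+1) * (y * ((P (m+1)).eval y * (P m).eval y * w y))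
          + β (m+1) * (y * ((P m).eval y * (P m).eval y * w y)) := by
      funext y
      have hr := hrec (m+1) (by omega) y
      simp only [Nat.add_sub_cancel] at hr
      linear_combination (y * (P m).eval y * w y) * hr
    rw [hsplit, my_integral_add3 (iY _ _) ((iY _ _).const_mul _) ((iY _ _).const_mul _),
      integral_const_mul, integral_const_mul, hXPm, hI1, hyBB]
    ring
  -- derivative integrals
  have hdB : ∫ y in Ioi (0:ℝ), (P m).derivative.eval y * (P (m+1)).eval y * w y = 0 := by
    apply orth_low lam t ht w hw P h hP horth hP0 (m+1)
    calc (P m).derivative.degree < (P m).degree := degree_derivative_lt (hP m).1.ne_zero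
      _ = ((m : ℕ) : WithBot ℕ) := by
          rw [degree_eq_natDegree (hP m).1.ne_zero, (hP m).2]
      _ ≤ ((m + 1 : ℕ) : WithBot ℕ) := by exact_mod_cast (by omega : m ≤ m + 1)
  have hcA : (P (m+1)).coeff (m+1) = 1 := by
    have hc := (hP (m+1)).1
    rw [Monic, leadingCoeff, (hP (m+1)).2] at hc
    exact hc
  have hcB : (P m).coeff m = 1 := by
    have hc := (hP m).1
    rw [Monic, leadingCoeff, (hP m).2] at hc
    exact hc
  have hdA : ∫ y in Ioi (0:ℝ), (P (m+1)).derivative.eval y * (P m).eval y * w y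
      = ((m:ℝ) + 1) * h m := by
    set R := (P (m+1)).derivative - C ((m:ℝ)+1) * P m with hRdef
    have hRdeg : R.degree < (m : ℕ) := by
      rw [degree_lt_iff_coeff_zero]
      intro j hj
      rw [hRdef, coeff_sub, coeff_derivative, coeff_C_mul]
      rcases eq_or_lt_of_le hj with hj1 | hj1
      · subst hj1
        rw [hcA, hcB]
        push_cast
        ring
      · rw [coeff_eq_zero_of_natDegree_lt (by rw [(hP (m+1)).2]; omega),
          coeff_eq_zero_of_natDegree_lt (by rw [(hP m).2]; omega)]
        ring
    have hsplit : (fun y : ℝ => (P (m+1)).derivative.eval y * (P m).eval y * w y)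
        = fun y : ℝ => R.eval y * (P m).eval y * w y
          + ((m:ℝ)+1) * ((P m).eval y * (P m).eval y * w y) := by
      funext y
      rw [hRdef]
      simp only [eval_sub, eval_mul, eval_C]
      ring
    have h1 := integral_add (μ := volume.restrict (Ioi 0)) (ipp R (P m))
      ((ipp (P m) (P m)).const_mul ((m:ℝ)+1))
    rw [hsplit, h1, integral_const_mul,
      orth_low lam t ht w hw P h hP horth hP0 m R hRdeg, horth m m, if_pos rfl]
    ring
  -- integration by parts identity
  set J1 := ∫ y in Ioi (0:ℝ), y⁻¹ * ((P (m+1)).eval y * (P m).eval y * w y) with hJ1def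
  set J2 := ∫ y in Ioi (0:ℝ), (y^2)⁻¹ * ((P (m+1)).eval y * (P m).eval y * w y) with hJ2def
  have hJrel : lam * J1 + t * J2
      = 3 * ((α (m+1) + α m) * β (m+1) * h m) - ((m:ℝ)+1) * h m := by
    have h0 := ibp lam t hlam ht (P (m+1) * P m)
    have heq : EqOn
        (fun y : ℝ => ((P (m+1) * P m).derivative.eval y * (y ^ lam * Real.exp (-y ^ 3 - t / y))
          + (P (m+1) * P m).eval y * ((y ^ lam * Real.exp (-y ^ 3 - t / y))
            * (lam / y - 3 * y ^ 2 + t / y ^ 2))))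
        (fun y : ℝ => (P (m+1)).derivative.eval y * (P m).eval y * w y
          + (P m).derivative.eval y * (P (m+1)).eval y * w y
          + lam * (y⁻¹ * ((P (m+1)).eval y * (P m).eval y * w y))
          + (-3) * (y ^ 2 * ((P (m+1)).eval y * (P m).eval y * w y))
          + t * ((y^2)⁻¹ * ((P (m+1)).eval y * (P m).eval y * w y))) (Ioi 0) := by
      intro y hy
      have hy0 : (0:ℝ) < y := hy
      have hyne : y ≠ 0 := ne_of_gt hy0
      dsimp only
      rw [← hw y hy0]
      simp only [derivative_mul, eval_add, eval_mul]
      rw [div_eq_mul_inv lam y, div_eq_mul_inv t (y^2)]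
      ring
    rw [setIntegral_congr_fun measurableSet_Ioi heq] at h0
    rw [my_integral_add5 (ipp _ _) (ipp _ _) ((iInv _ _).const_mul _)
      ((iY2 _ _).const_mul _) ((iInv2 _ _).const_mul _)] at h0
    rw [integral_const_mul, integral_const_mul, integral_const_mul] at h0
    rw [hdA, hdB, hI2] at h0
    rw [hJ1def, hJ2def]
    linarith [h0]
  -- the kernel integral
  have hxne : ∀ᵐ (y:ℝ), y ≠ x := by
    rw [MeasureTheory.ae_iff]
    have e : {y : ℝ | ¬ y ≠ x} = {x} := by ext y; simp
    rw [e]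
    exact measure_singleton x
  have hker : ∫ y in Ioi (0:ℝ),
      (((3 * x ^ 2 - lam / x - t / x ^ 2) - (3 * y ^ 2 - lam / y - t / y ^ 2)) / (x - y))
        * (P (m+1)).eval y * (P m).eval y * w y
      = (3*x) * (∫ y in Ioi (0:ℝ), (P (m+1)).eval y * (P m).eval y * w y)
        + 3 * (∫ y in Ioi (0:ℝ), y * ((P (m+1)).eval y * (P m).eval y * w y))
        + (lam * x⁻¹ + t * (x^2)⁻¹) * J1 + (t * x⁻¹) * J2 := by
    have hae : (fun y : ℝ =>
        (((3 * x ^ 2 - lam / x - t / x ^ 2) - (3 * y ^ 2 - lam / y - t / y ^ 2)) / (x - y))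
          * (P (m+1)).eval y * (P m).eval y * w y)
        =ᵐ[volume.restrict (Ioi (0:ℝ))] (fun y : ℝ =>
        (3*x) * ((P (m+1)).eval y * (P m).eval y * w y)
          + 3 * (y * ((P (m+1)).eval y * (P m).eval y * w y))
          + (lam * x⁻¹ + t * (x^2)⁻¹) * (y⁻¹ * ((P (m+1)).eval y * (P m).eval y * w y))
          + (t * x⁻¹) * ((y^2)⁻¹ * ((P (m+1)).eval y * (P m).eval y * w y))) := by
      rw [EventuallyEq, ae_restrict_iff' measurableSet_Ioi]
      filter_upwards [hxne] with y hyx hy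
      have hy0 : (0:ℝ) < y := hy
      have hyne : y ≠ 0 := ne_of_gt hy0
      have hxne' : x ≠ 0 := ne_of_gt hx
      have hxy : x - y ≠ 0 := sub_ne_zero.mpr (Ne.symm hyx)
      have hkernel : ((3 * x ^ 2 - lam / x - t / x ^ 2) - (3 * y ^ 2 - lam / y - t / y ^ 2)) / (x - y)
          = 3*x + 3*y + lam * (x⁻¹ * y⁻¹) + t * (x⁻¹ * (y^2)⁻¹) + t * ((x^2)⁻¹ * y⁻¹) := by
        rw [div_eq_iff hxy]
        field_simp
        ring
      rw [hkernel]
      ring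
    rw [integral_congr_ae hae]
    rw [my_integral_add4 ((ipp _ _).const_mul _) ((iY _ _).const_mul _)
      ((iInv _ _).const_mul _) ((iInv2 _ _).const_mul _)]
    rw [integral_const_mul, integral_const_mul, integral_const_mul, integral_const_mul]
  -- final algebra
  have hJ1eq : ∫ y in Ioi (0:ℝ), y⁻¹ * (P (m+1)).eval y * (P m).eval y * w y = J1 := by
    rw [hJ1def]
    congr 1
    funext y
    ring
  rw [hker, hJ1eq, hI0, hI1]
  have hhm : h m ≠ 0 := ne_of_gt (hpos m)
  have hx0 : x ≠ 0 := ne_of_gt hx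
  have hcast : ((m+1 : ℕ) : ℝ) = (m:ℝ) + 1 := by push_cast; ring
  rw [hcast]
  have e1 : (1/h m) * ((3*x) * 0 + 3 * (β (m+1) * h m)
      + (lam * x⁻¹ + t * (x^2)⁻¹) * J1 + (t * x⁻¹) * J2)
      = 3 * β (m+1) + x⁻¹ * ((lam * J1 + t * J2)/h m) + (x^2)⁻¹ * ((t * J1)/h m) := by
    field_simp
    ring
  rw [e1, hJrel]
  have e2 : (3 * ((α (m+1) + α m) * β (m+1) * h m) - ((m:ℝ)+1) * h m)/h m
      = 3 * ((α (m+1) + α m) * β (m+1)) - ((m:ℝ)+1) := by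
    field_simp
  rw [e2]
  field_simp
end

section
/- For every n ≥ 1, the auxiliary quantities satisfy r_n* + r_{n+1}* = t − α_n R_n*. -/
open MeasureTheory Polynomial Real Filter

lemma aux_integrable (lam t : ℝ) (ht : 0 < t) (Q : Polynomial ℝ) :
    IntegrableOn
      (fun x : ℝ => x⁻¹ * Q.eval x * (x ^ lam * Real.exp (-x ^ 3 - t / x)))
      (Set.Ioi 0) := by
  set g : ℝ → ℝ := fun x => x⁻¹ * Q.eval x * (x ^ lam * Real.exp (-x ^ 3 - t / x)) with hg
  have hcont : ContinuousOn g (Set.Ioi 0) := by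
    apply ContinuousOn.mul
    · exact (continuousOn_inv₀.mono (fun x hx => ne_of_gt hx)).mul
        Q.continuous_aeval.continuousOn
    · apply ContinuousOn.mul
      · intro x hx
        exact (Real.continuousAt_rpow_const x lam (Or.inl (ne_of_gt hx))).continuousWithinAt
      · apply (Real.continuous_exp.comp_continuousOn)
        exact ((continuous_pow 3).continuousOn.neg).sub
          (continuousOn_const.div continuousOn_id (fun x hx => ne_of_gt hx))
  have key : Set.Ioc (0:ℝ) 1 ∪ Set.Ioi 1 = Set.Ioi 0 := Set.Ioc_union_Ioi_eq_Ioi zero_le_one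
  rw [← key, integrableOn_union]
  constructor
  · -- bounded on Ioc 0 1
    obtain ⟨M, hM⟩ := (isCompact_Icc (a := (0:ℝ)) (b := 1)).exists_bound_of_continuousOn
      Q.continuous_aeval.continuousOn
    set k : ℕ := ⌈1 - lam⌉₊ with hk
    have hkk : 1 - lam ≤ (k : ℝ) := Nat.le_ceil _
    apply Integrable.mono' (g := fun _ => M * (k.factorial * (t ^ k)⁻¹))
      (integrableOn_const measure_Ioc_lt_top.ne)
      ((hcont.mono (Set.Ioc_subset_Ioi_self)).aestronglyMeasurable measurableSet_Ioc)
    filter_upwards [ae_restrict_mem measurableSet_Ioc] with x hx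
    obtain ⟨hx0, hx1⟩ := hx
    have hQx : |Q.eval x| ≤ M := by
      have := hM x ⟨hx0.le, hx1⟩
      simpa [Polynomial.aeval_def, Real.norm_eq_abs] using this
    have hMnn : 0 ≤ M := le_trans (abs_nonneg _) hQx
    have hexp1 : Real.exp (-x ^ 3 - t / x) ≤ Real.exp (-(t / x)) := by
      apply Real.exp_le_exp.2; nlinarith [pow_pos hx0 3]
    have hexp2 : Real.exp (-(t / x)) ≤ k.factorial * (t ^ k)⁻¹ * x ^ k := by
      rw [Real.exp_neg]
      have h1 : (t / x) ^ k / k.factorial ≤ Real.exp (t / x) :=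
        Real.pow_div_factorial_le_exp (t / x) (by positivity) k
      rw [inv_le_iff_one_le_mul₀' (Real.exp_pos _)]
      calc (1 : ℝ) = ((t / x) ^ k / k.factorial) * (k.factorial * (t ^ k)⁻¹ * x ^ k) := by
            rw [div_pow]; field_simp
        _ ≤ Real.exp (t / x) * (k.factorial * (t ^ k)⁻¹ * x ^ k) := by
            apply mul_le_mul_of_nonneg_right h1; positivity
    have hrpow : x⁻¹ * x ^ lam * x ^ k ≤ 1 := by
      have e1 : x⁻¹ * x ^ lam * (x : ℝ) ^ k = x ^ (lam - 1 + k) := by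
        rw [← Real.rpow_natCast x k, ← Real.rpow_neg_one x]
        rw [← Real.rpow_add hx0, ← Real.rpow_add hx0]
        ring_nf
      rw [e1]
      exact Real.rpow_le_one hx0.le hx1 (by linarith)
    have hxlnn : (0:ℝ) ≤ x ^ lam := Real.rpow_nonneg hx0.le _
    calc ‖g x‖ = x⁻¹ * |Q.eval x| * (x ^ lam * Real.exp (-x ^ 3 - t / x)) := by
          rw [hg]; simp only [Real.norm_eq_abs, abs_mul]
          rw [abs_of_pos (inv_pos.2 hx0), abs_of_nonneg hxlnn,
            abs_of_pos (Real.exp_pos _)]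
      _ ≤ x⁻¹ * M * (x ^ lam * (k.factorial * (t ^ k)⁻¹ * x ^ k)) := by
          apply mul_le_mul
          · exact mul_le_mul_of_nonneg_left hQx (by positivity)
          · exact mul_le_mul_of_nonneg_left (hexp1.trans hexp2) hxlnn
          · positivity
          · positivity
      _ = (x⁻¹ * x ^ lam * x ^ k) * (M * (k.factorial * (t ^ k)⁻¹)) := by ring
      _ ≤ 1 * (M * (k.factorial * (t ^ k)⁻¹)) := by
          apply mul_le_mul_of_nonneg_right hrpow (by positivity)
      _ = M * (k.factorial * (t ^ k)⁻¹) := one_mul _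
  · -- Ioi 1 : dominated by S * x^N * exp(-x)
    set d : ℕ := Q.natDegree with hd
    set S : ℝ := ∑ i ∈ Finset.range (d + 1), |Q.coeff i| with hS
    have hSnn : 0 ≤ S := Finset.sum_nonneg fun i _ => abs_nonneg _
    set L : ℕ := ⌈lam⌉₊ with hL
    have hlamL : lam ≤ (L : ℝ) := Nat.le_ceil _
    have hGamma : IntegrableOn
        (fun x : ℝ => S * (Real.exp (-x) * x ^ ((d + L + 1 : ℕ) - 1 : ℝ))) (Set.Ioi 1) := by
      apply Integrable.const_mul
      exact (Real.GammaIntegral_convergent (s := (d + L + 1 : ℕ))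
        (by positivity)).mono_set (Set.Ioi_subset_Ioi zero_le_one)
    apply Integrable.mono' hGamma
      ((hcont.mono (Set.Ioi_subset_Ioi zero_le_one)).aestronglyMeasurable measurableSet_Ioi)
    filter_upwards [ae_restrict_mem measurableSet_Ioi] with x hx
    have hx1 : (1:ℝ) < x := hx
    have hx0 : (0:ℝ) < x := lt_trans one_pos hx1
    have hQx : |Q.eval x| ≤ S * x ^ d := by
      rw [Polynomial.eval_eq_sum_range]
      calc |∑ i ∈ Finset.range (d + 1), Q.coeff i * x ^ i|
          ≤ ∑ i ∈ Finset.range (d + 1), |Q.coeff i * x ^ i| := Finset.abs_sum_le_sum_abs _ _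
        _ ≤ ∑ i ∈ Finset.range (d + 1), |Q.coeff i| * x ^ d := by
            apply Finset.sum_le_sum
            intro i hi
            rw [abs_mul, abs_of_pos (pow_pos hx0 i)]
            exact mul_le_mul_of_nonneg_left
              (pow_le_pow_right₀ hx1.le (Nat.lt_succ_iff.1 (Finset.mem_range.1 hi)))
              (abs_nonneg _)
        _ = S * x ^ d := by rw [← Finset.sum_mul]
    have hxl : x ^ lam ≤ x ^ (L : ℕ) := by
      rw [← Real.rpow_natCast x L]
      exact Real.rpow_le_rpow_of_exponent_le hx1.le hlamL
    have hexp : Real.exp (-x ^ 3 - t / x) ≤ Real.exp (-x) := by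
      apply Real.exp_le_exp.2
      have : x ≤ x ^ 3 := le_self_pow₀ hx1.le (by norm_num)
      have : 0 < t / x := by positivity
      linarith
    have hxinv : x⁻¹ ≤ 1 := by
      rw [inv_le_one_iff₀]; right; exact hx1.le
    have hxlnn : (0:ℝ) ≤ x ^ lam := Real.rpow_nonneg hx0.le _
    calc ‖g x‖ = x⁻¹ * |Q.eval x| * (x ^ lam * Real.exp (-x ^ 3 - t / x)) := by
          rw [hg]; simp only [Real.norm_eq_abs, abs_mul]
          rw [abs_of_pos (inv_pos.2 hx0), abs_of_nonneg hxlnn,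
            abs_of_pos (Real.exp_pos _)]
      _ ≤ 1 * (S * x ^ d) * (x ^ (L:ℕ) * Real.exp (-x)) := by
          apply mul_le_mul
          · exact mul_le_mul hxinv hQx (abs_nonneg _) zero_le_one
          · exact mul_le_mul hxl hexp (le_of_lt (Real.exp_pos _)) (by positivity)
          · positivity
          · positivity
      _ = S * (Real.exp (-x) * (x ^ d * x ^ (L:ℕ))) := by ring
      _ = S * (Real.exp (-x) * x ^ ((d + L + 1 : ℕ) - 1 : ℝ)) := by
          congr 1
          congr 1
          rw [← pow_add, ← Real.rpow_natCast x (d + L)]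
          congr 1
          push_cast
          ring
theorem stmt_4
    (lam t : ℝ) (hlam : -1 < lam) (ht : 0 < t)
    (w : ℝ → ℝ)
    (hw : ∀ x : ℝ, 0 < x → w x = x ^ lam * Real.exp (-x ^ 3 - t / x))
    (P : ℕ → Polynomial ℝ) (h : ℕ → ℝ) (α β : ℕ → ℝ)
    (hP : ∀ n, (P n).Monic ∧ (P n).natDegree = n)
    (hpos : ∀ n, 0 < h n)
    (horth : ∀ m n, ∫ x in Set.Ioi (0 : ℝ),
        (P m).eval x * (P n).eval x * w x = if m = n then h n else 0)
    (hP0 : P 0 = 1)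
    (hrec : ∀ n, 1 ≤ n → ∀ x : ℝ, x * (P n).eval x
        = (P (n + 1)).eval x + α n * (P n).eval x + β n * (P (n - 1)).eval x)
    (hrec0 : ∀ x : ℝ, x * (P 0).eval x = (P 1).eval x + α 0 * (P 0).eval x)
    (Rs : ℕ → ℝ)
    (hRs : ∀ m : ℕ, Rs m = (t / h m) * ∫ y in Set.Ioi (0 : ℝ),
        y⁻¹ * ((P m).eval y) ^ 2 * w y)
    (rs : ℕ → ℝ)
    (hrs : ∀ m : ℕ, 1 ≤ m → rs m = (t / h (m - 1)) * ∫ y in Set.Ioi (0 : ℝ),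
        y⁻¹ * (P m).eval y * (P (m - 1)).eval y * w y)
    : ∀ n : ℕ, 1 ≤ n → rs n + rs (n + 1) = t - α n * Rs n := by
  intro n hn
  obtain ⟨m, rfl⟩ : ∃ m, n = m + 1 := ⟨n - 1, (Nat.succ_pred_eq_of_pos hn).symm⟩
  -- integrability helpers
  have hInt : ∀ Q : Polynomial ℝ,
      IntegrableOn (fun x : ℝ => x⁻¹ * Q.eval x * w x) (Set.Ioi 0) := by
    intro Q
    exact (aux_integrable lam t ht Q).congr_fun (fun x hx => by rw [hw x hx])
      measurableSet_Ioi
  have hIntPP : ∀ a b : ℕ,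
      IntegrableOn (fun x : ℝ => (P a).eval x * (P b).eval x * w x) (Set.Ioi 0) := by
    intro a b
    apply (hInt (Polynomial.X * (P a * P b))).congr_fun _ measurableSet_Ioi
    intro x hx
    have hx0 : x ≠ 0 := ne_of_gt hx
    simp only [Polynomial.eval_mul, Polynomial.eval_X, ← mul_assoc,
      inv_mul_cancel₀ hx0, one_mul]
  have hIntX : ∀ a b : ℕ,
      IntegrableOn (fun x : ℝ => x * (P a).eval x * (P b).eval x * w x) (Set.Ioi 0) := by
    intro a b
    apply (hInt (Polynomial.X * Polynomial.X * (P a * P b))).congr_fun _ measurableSet_Ioi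
    intro x hx
    have hx0 : x ≠ 0 := ne_of_gt hx
    simp only [Polynomial.eval_mul, Polynomial.eval_X, ← mul_assoc,
      inv_mul_cancel₀ hx0, one_mul]
  have hIntiPP : ∀ a b : ℕ,
      IntegrableOn (fun x : ℝ => x⁻¹ * (P a).eval x * (P b).eval x * w x) (Set.Ioi 0) := by
    intro a b
    apply (hInt (P a * P b)).congr_fun _ measurableSet_Ioi
    intro x hx
    simp only [Polynomial.eval_mul, ← mul_assoc]
  have hIntiSq :
      IntegrableOn (fun x : ℝ => x⁻¹ * ((P (m + 1)).eval x) ^ 2 * w x) (Set.Ioi 0) := by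
    apply (hInt (P (m + 1) * P (m + 1))).congr_fun _ measurableSet_Ioi
    intro x hx
    simp only [Polynomial.eval_mul, ← mul_assoc, sq]
  -- Step A : β (m+1) * h m = h (m+1)
  have hβ : β (m + 1) * h m = h (m + 1) := by
    have hJ1 : (∫ y in Set.Ioi (0:ℝ), y * (P (m+1)).eval y * (P m).eval y * w y)
        = β (m + 1) * h m := by
      have hpt : ∀ y : ℝ, y * (P (m+1)).eval y * (P m).eval y * w y
          = ((P (m+2)).eval y * (P m).eval y * w y)
            + (α (m+1) * ((P (m+1)).eval y * (P m).eval y * w y)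
            + β (m+1) * ((P m).eval y * (P m).eval y * w y)) := by
        intro y
        have hr := hrec (m + 1) (by omega) y
        simp only [Nat.add_sub_cancel] at hr
        linear_combination ((P m).eval y * w y) * hr
      have i1 : Integrable (fun y : ℝ => α (m+1) * ((P (m+1)).eval y * (P m).eval y * w y)
            + β (m+1) * ((P m).eval y * (P m).eval y * w y))
          (volume.restrict (Set.Ioi 0)) :=
        ((hIntPP (m+1) m).const_mul (α (m+1))).add ((hIntPP m m).const_mul (β (m+1)))
      simp only [hpt]
      rw [integral_add (hIntPP (m+2) m) i1,
        integral_add ((hIntPP (m+1) m).const_mul (α (m+1)))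
          ((hIntPP m m).const_mul (β (m+1))),
        integral_const_mul, integral_const_mul, horth (m+2) m, horth (m+1) m, horth m m,
        if_neg (by omega : ¬ m + 2 = m), if_neg (by omega : ¬ m + 1 = m), if_pos rfl]
      ring
    have hJ2 : (∫ y in Set.Ioi (0:ℝ), y * (P (m+1)).eval y * (P m).eval y * w y)
        = h (m + 1) := by
      rcases Nat.eq_zero_or_pos m with rfl | hm
      · have hpt : ∀ y : ℝ, y * (P 1).eval y * (P 0).eval y * w y
            = ((P 1).eval y * (P 1).eval y * w y)
              + α 0 * ((P 1).eval y * (P 0).eval y * w y) := by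
          intro y
          have hr := hrec0 y
          linear_combination ((P 1).eval y * w y) * hr
        simp only [zero_add]
        simp only [hpt]
        rw [integral_add (hIntPP 1 1) ((hIntPP 1 0).const_mul (α 0)),
          integral_const_mul, horth 1 1, horth 1 0,
          if_pos rfl, if_neg (by omega : ¬ 1 = 0)]
        ring
      · have hpt : ∀ y : ℝ, y * (P (m+1)).eval y * (P m).eval y * w y
            = ((P (m+1)).eval y * (P (m+1)).eval y * w y)
              + (α m * ((P (m+1)).eval y * (P m).eval y * w y)
              + β m * ((P (m+1)).eval y * (P (m-1)).eval y * w y)) := by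
          intro y
          have hr := hrec m hm y
          linear_combination ((P (m+1)).eval y * w y) * hr
        have i1 : Integrable (fun y : ℝ => α m * ((P (m+1)).eval y * (P m).eval y * w y)
              + β m * ((P (m+1)).eval y * (P (m-1)).eval y * w y))
            (volume.restrict (Set.Ioi 0)) :=
          ((hIntPP (m+1) m).const_mul (α m)).add ((hIntPP (m+1) (m-1)).const_mul (β m))
        simp only [hpt]
        rw [integral_add (hIntPP (m+1) (m+1)) i1,
          integral_add ((hIntPP (m+1) m).const_mul (α m))
            ((hIntPP (m+1) (m-1)).const_mul (β m)),
          integral_const_mul, integral_const_mul, horth (m+1) (m+1), horth (m+1) m,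
          horth (m+1) (m-1),
          if_pos rfl, if_neg (by omega : ¬ m + 1 = m),
          if_neg (by omega : ¬ m + 1 = m - 1)]
        ring
    rw [← hJ1, hJ2]
  -- Step B : expand the (m+2, m+1) integral
  have hB : (∫ y in Set.Ioi (0:ℝ), y⁻¹ * (P (m+2)).eval y * (P (m+1)).eval y * w y)
      = h (m+1) - α (m+1) * (∫ y in Set.Ioi (0:ℝ), y⁻¹ * ((P (m+1)).eval y) ^ 2 * w y)
        - β (m+1) * (∫ y in Set.Ioi (0:ℝ), y⁻¹ * (P (m+1)).eval y * (P m).eval y * w y) := by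
    have hpt : ∀ y ∈ Set.Ioi (0:ℝ), y⁻¹ * (P (m+2)).eval y * (P (m+1)).eval y * w y
        = ((P (m+1)).eval y * (P (m+1)).eval y * w y)
          - α (m+1) * (y⁻¹ * ((P (m+1)).eval y) ^ 2 * w y)
          - β (m+1) * (y⁻¹ * (P (m+1)).eval y * (P m).eval y * w y) := by
      intro y hy
      have hy0 : y ≠ 0 := ne_of_gt hy
      have hyinv : y⁻¹ * y = 1 := inv_mul_cancel₀ hy0
      have hr := hrec (m + 1) (by omega) y
      simp only [Nat.add_sub_cancel] at hr
      linear_combination (-(y⁻¹ * (P (m+1)).eval y * w y)) * hr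
        + ((P (m+1)).eval y * (P (m+1)).eval y * w y) * hyinv
    have i1 : Integrable (fun y : ℝ => (P (m+1)).eval y * (P (m+1)).eval y * w y
          - α (m+1) * (y⁻¹ * ((P (m+1)).eval y) ^ 2 * w y))
        (volume.restrict (Set.Ioi 0)) :=
      (hIntPP (m+1) (m+1)).sub (hIntiSq.const_mul (α (m+1)))
    rw [setIntegral_congr_fun measurableSet_Ioi hpt,
      integral_sub i1 ((hIntiPP (m+1) m).const_mul (β (m+1))),
      integral_sub (hIntPP (m+1) (m+1)) (hIntiSq.const_mul (α (m+1))),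
      integral_const_mul, integral_const_mul, horth (m+1) (m+1), if_pos rfl]
  -- Step C : conclude
  show rs (m + 1) + rs (m + 2) = t - α (m + 1) * Rs (m + 1)
  have h1 := hrs (m + 1) (by omega)
  have h2 := hrs (m + 2) (by omega)
  simp only [Nat.add_sub_cancel] at h1
  have hidx : m + 2 - 1 = m + 1 := by omega
  rw [hidx] at h2
  have h3 := hRs (m + 1)
  have hm0 : h m ≠ 0 := ne_of_gt (hpos m)
  have hm1 : h (m + 1) ≠ 0 := ne_of_gt (hpos (m + 1))
  have hβ0 : β (m + 1) ≠ 0 := by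
    intro hc
    rw [hc, zero_mul] at hβ
    exact hm1 hβ.symm
  set IA := ∫ y in Set.Ioi (0:ℝ), y⁻¹ * (P (m+1)).eval y * (P m).eval y * w y with hIA
  set IB := ∫ y in Set.Ioi (0:ℝ), y⁻¹ * (P (m+2)).eval y * (P (m+1)).eval y * w y with hIB
  set IC := ∫ y in Set.Ioi (0:ℝ), y⁻¹ * ((P (m+1)).eval y) ^ 2 * w y with hIC
  rw [h1, h2, h3, hB]
  field_simp
  linear_combination (-IA) * hβ
end

section
/- For every n ≥ 1, the auxiliary quantity R_n* is expressed in terms of the recurrence coefficients as R_n* = r_n + r_{n+1} + α_n R_n − λ, where R_n := 3(α_n² + β_n + β_{n+1}) and r_n := 3(α_n + α_{n−1})β_n − n. -/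
open MeasureTheory Polynomial Real Filter
open Set

lemma aux_meas (t s : ℝ) : Measurable (fun x : ℝ => x ^ s * Real.exp (-x ^ 3 - t / x)) := by
  apply Measurable.mul
  · exact measurable_id.pow_const _
  · exact (((measurable_id.pow_const 3).neg.sub (measurable_const.div measurable_id)).exp)

lemma aux_exp_bound (t : ℝ) (ht : 0 < t) (k : ℕ) {x : ℝ} (hx : 0 < x) :
    Real.exp (-(t / x)) ≤ ((k : ℝ) / t) ^ k * x ^ k := by
  rcases Nat.eq_zero_or_pos k with hk | hk
  · subst hk; simpa using Real.exp_le_one_iff.mpr (neg_nonpos.mpr (by positivity))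
  · have hkx : (0:ℝ) < k := by exact_mod_cast hk
    have h1 : (t / (k * x)) ^ k ≤ Real.exp (t / x) := by
      have : Real.exp (t / x) = (Real.exp (t / (k * x))) ^ k := by
        rw [← Real.exp_nat_mul]
        congr 1
        field_simp
      rw [this]
      apply pow_le_pow_left₀ (by positivity)
      linarith [Real.add_one_le_exp (t / (k * x)), le_of_lt (show (0:ℝ) < t / (k*x) by positivity)]
    have h2 : Real.exp (-(t/x)) = (Real.exp (t/x))⁻¹ := by rw [← Real.exp_neg]
    rw [h2]
    have h3 : ((t / (k * x)) ^ k)⁻¹ = ((k:ℝ)/t)^k * x ^ k := by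
      rw [← inv_pow, ← mul_pow]
      congr 1
      field_simp
    rw [← h3]
    exact inv_anti₀ (by positivity) h1

lemma aux_int1 (t : ℝ) (ht : 0 < t) (s : ℝ) :
    IntegrableOn (fun x : ℝ => x ^ s * Real.exp (-x ^ 3 - t / x)) (Ioi 0) := by
  have hmeas := aux_meas t s
  have hsplit : Ioc (0:ℝ) 1 ∪ Ioi 1 = Ioi 0 := Ioc_union_Ioi_eq_Ioi zero_le_one
  rw [← hsplit]
  apply IntegrableOn.union
  · -- near zero: bounded
    set k : ℕ := ⌈max 0 (-s)⌉₊ with hkdef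
    have hks : 0 ≤ s + k := by
      have : -s ≤ (k:ℝ) := le_trans (le_max_right 0 (-s)) (Nat.le_ceil _)
      linarith
    apply Measure.integrableOn_of_bounded (M := ((k:ℝ)/t)^k) (by simp)
      hmeas.aestronglyMeasurable
    filter_upwards [ae_restrict_mem measurableSet_Ioc] with x hx
    obtain ⟨hx0, hx1⟩ := hx
    have h1 : Real.exp (-x^3 - t/x) ≤ Real.exp (-(t/x)) := by
      apply Real.exp_le_exp.mpr; nlinarith [pow_pos hx0 3]
    have h2 := aux_exp_bound t ht k hx0
    have h3 : x ^ s * (((k:ℝ)/t)^k * x ^ k) = ((k:ℝ)/t)^k * x ^ (s + k) := by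
      rw [Real.rpow_add hx0, Real.rpow_natCast]; ring
    have h4 : x ^ (s + (k:ℝ)) ≤ 1 := Real.rpow_le_one (le_of_lt hx0) hx1 hks
    have h5 : 0 ≤ x ^ s := Real.rpow_nonneg (le_of_lt hx0) s
    rw [Real.norm_eq_abs, abs_of_nonneg (by positivity)]
    calc x ^ s * Real.exp (-x^3 - t/x) ≤ x ^ s * (((k:ℝ)/t)^k * x ^ k) := by
          exact mul_le_mul_of_nonneg_left (le_trans h1 h2) h5
      _ = ((k:ℝ)/t)^k * x ^ (s + (k:ℝ)) := h3
      _ ≤ ((k:ℝ)/t)^k * 1 := by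
          apply mul_le_mul_of_nonneg_left h4 (by positivity)
      _ = ((k:ℝ)/t)^k := mul_one _
  · -- near infinity
    have hmaj : IntegrableOn (fun x : ℝ => x ^ max s 0 * Real.exp (-x ^ (3:ℝ))) (Ioi 1) := by
      apply (integrableOn_rpow_mul_exp_neg_rpow (lt_of_lt_of_le neg_one_lt_zero (le_max_right s 0)) (by norm_num)).mono_set
      exact Ioi_subset_Ioi zero_le_one
    apply Integrable.mono' hmaj hmeas.aestronglyMeasurable
    filter_upwards [ae_restrict_mem measurableSet_Ioi] with x hx
    have hx1 : (1:ℝ) ≤ x := le_of_lt hx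
    have hx0 : (0:ℝ) < x := lt_of_lt_of_le one_pos hx1
    rw [Real.norm_eq_abs, abs_of_nonneg (by positivity)]
    have h30 : x ^ (3:ℝ) = x ^ (3:ℕ) := by rw [← Real.rpow_natCast]; norm_num
    have h1 : x ^ s ≤ x ^ max s 0 := Real.rpow_le_rpow_of_exponent_le hx1 (le_max_left s 0)
    have h2 : Real.exp (-x^3 - t/x) ≤ Real.exp (-x ^ (3:ℝ)) := by
      rw [h30]
      apply Real.exp_le_exp.mpr
      have : 0 ≤ t / x := by positivity
      linarith
    exact mul_le_mul h1 h2 (le_of_lt (Real.exp_pos _)) (Real.rpow_nonneg (le_of_lt hx0) _)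

lemma aux_int_poly (t : ℝ) (ht : 0 < t) (s : ℝ) (q : Polynomial ℝ) :
    IntegrableOn (fun x : ℝ => x ^ s * q.eval x * Real.exp (-x ^ 3 - t / x)) (Ioi 0) := by
  induction q using Polynomial.induction_on' with
  | add p r hp hr =>
    apply MeasureTheory.IntegrableOn.congr_fun (hp.add hr) _ measurableSet_Ioi
    intro x hx
    simp only [Pi.add_apply, eval_add]
    ring
  | monomial k a =>
    apply MeasureTheory.IntegrableOn.congr_fun ((aux_int1 t ht (s + k)).const_mul a) _
      measurableSet_Ioi
    intro x hx
    have hx0 : (0:ℝ) < x := hx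
    simp only [eval_monomial]
    rw [Real.rpow_add hx0, Real.rpow_natCast]
    ring

lemma aux_lim_zero (t : ℝ) (ht : 0 < t) (s : ℝ) (q : Polynomial ℝ) :
    Tendsto (fun x : ℝ => x ^ s * q.eval x * Real.exp (-x ^ 3 - t / x))
      (nhdsWithin 0 (Ioi 0)) (nhds 0) := by
  obtain ⟨C, hC⟩ := (isCompact_Icc (a := (0:ℝ)) (b := 1)).exists_bound_of_continuousOn
    (q.continuous.continuousOn (s := Icc 0 1))
  have hg : Tendsto (fun x : ℝ => C * (x ^ s * Real.exp (-(t * x⁻¹)))) (nhdsWithin 0 (Ioi 0)) (nhds 0) := by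
    have h1 : Tendsto (fun u : ℝ => C * (u ^ (-s) * Real.exp (-(t * u)))) atTop (nhds 0) := by
      have := tendsto_rpow_mul_exp_neg_mul_atTop_nhds_zero (-s) t ht
      simpa using this.const_mul C
    have h2 := h1.comp tendsto_inv_nhdsGT_zero
    apply h2.congr'
    filter_upwards [self_mem_nhdsWithin] with x hx
    have hx0 : (0:ℝ) < x := hx
    simp only [Function.comp]
    rw [Real.inv_rpow (le_of_lt hx0), Real.rpow_neg (le_of_lt hx0), inv_inv]
  apply squeeze_zero_norm' _ hg
  filter_upwards [Ioc_mem_nhdsGT_of_mem (by norm_num : (0:ℝ) ∈ Ico (0:ℝ) 1)] with x hx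
  obtain ⟨hx0, hx1⟩ := hx
  have hCx : |q.eval x| ≤ C := by
    have := hC x ⟨le_of_lt hx0, hx1⟩
    simpa using this
  have hC0 : 0 ≤ C := le_trans (abs_nonneg _) hCx
  have hE : Real.exp (-x^3 - t/x) ≤ Real.exp (-(t * x⁻¹)) := by
    apply Real.exp_le_exp.mpr
    rw [div_eq_mul_inv]
    nlinarith [pow_pos hx0 3]
  rw [Real.norm_eq_abs, abs_mul, abs_mul, abs_of_nonneg (Real.rpow_nonneg (le_of_lt hx0) s),
    abs_of_nonneg (le_of_lt (Real.exp_pos _))]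
  calc x ^ s * |q.eval x| * Real.exp (-x^3 - t/x)
      ≤ x ^ s * C * Real.exp (-(t * x⁻¹)) := by
        apply mul_le_mul (mul_le_mul_of_nonneg_left hCx (Real.rpow_nonneg (le_of_lt hx0) s)) hE
          (le_of_lt (Real.exp_pos _)) (by positivity)
    _ = C * (x ^ s * Real.exp (-(t * x⁻¹))) := by ring

lemma aux_poly_bound (q : Polynomial ℝ) {x : ℝ} (hx : 1 ≤ x) :
    |q.eval x| ≤ (∑ i ∈ Finset.range (q.natDegree + 1), |q.coeff i|) * x ^ q.natDegree := by
  have hx0 : (0:ℝ) < x := lt_of_lt_of_le one_pos hx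
  rw [Polynomial.eval_eq_sum_range, Finset.sum_mul]
  apply (Finset.abs_sum_le_sum_abs _ _).trans
  apply Finset.sum_le_sum
  intro i hi
  rw [abs_mul, abs_of_nonneg (by positivity : (0:ℝ) ≤ x ^ i)]
  apply mul_le_mul_of_nonneg_left _ (abs_nonneg _)
  exact pow_le_pow_right₀ hx (Nat.lt_succ_iff.mp (Finset.mem_range.mp hi))

lemma aux_lim_top (t : ℝ) (ht : 0 < t) (s : ℝ) (q : Polynomial ℝ) :
    Tendsto (fun x : ℝ => x ^ s * q.eval x * Real.exp (-x ^ 3 - t / x))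
      atTop (nhds 0) := by
  set C := ∑ i ∈ Finset.range (q.natDegree + 1), |q.coeff i| with hCdef
  have hC0 : 0 ≤ C := Finset.sum_nonneg fun i _ => abs_nonneg _
  set M := s + (q.natDegree : ℝ) with hMdef
  have hg : Tendsto (fun x : ℝ => C * (x ^ M * Real.exp (-(1 * x)))) atTop (nhds 0) := by
    have := tendsto_rpow_mul_exp_neg_mul_atTop_nhds_zero M 1 one_pos
    simpa using this.const_mul C
  apply squeeze_zero_norm' _ hg
  filter_upwards [eventually_ge_atTop (1:ℝ)] with x hx1
  have hx0 : (0:ℝ) < x := lt_of_lt_of_le one_pos hx1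
  have hE : Real.exp (-x^3 - t/x) ≤ Real.exp (-(1*x)) := by
    apply Real.exp_le_exp.mpr
    have h1 : 0 ≤ t / x := by positivity
    nlinarith [sq_nonneg x, sq_nonneg (x-1)]
  have hq := aux_poly_bound q hx1
  rw [Real.norm_eq_abs, abs_mul, abs_mul, abs_of_nonneg (Real.rpow_nonneg (le_of_lt hx0) s),
    abs_of_nonneg (le_of_lt (Real.exp_pos _))]
  have key : x ^ s * (C * x ^ q.natDegree) = C * x ^ M := by
    rw [hMdef, Real.rpow_add hx0, Real.rpow_natCast]
    ring
  calc x ^ s * |q.eval x| * Real.exp (-x^3 - t/x)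
      ≤ x ^ s * (C * x ^ q.natDegree) * Real.exp (-(1*x)) := by
        apply mul_le_mul (mul_le_mul_of_nonneg_left hq (Real.rpow_nonneg (le_of_lt hx0) s)) hE
          (le_of_lt (Real.exp_pos _)) (by positivity)
    _ = C * (x ^ M * Real.exp (-(1*x))) := by rw [key]; ring

lemma aux_ibp (lam t : ℝ) (hlam : -1 < lam) (ht : 0 < t) (p : Polynomial ℝ) :
    ∫ x in Ioi (0:ℝ), ((lam+1) * (p.eval x)^2 + 2*x*(p.eval x)*((derivative p).eval x)
      + (-(3*x^3) + t * x⁻¹) * (p.eval x)^2) * (x ^ lam * Real.exp (-x^3 - t/x)) = 0 := by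
  set F : ℝ → ℝ := fun x => x ^ (lam+1) * (p.eval x)^2 * Real.exp (-x^3 - t/x) with hF
  set G : ℝ → ℝ := fun x => ((lam+1) * (p.eval x)^2 + 2*x*(p.eval x)*((derivative p).eval x)
      + (-(3*x^3) + t * x⁻¹) * (p.eval x)^2) * (x ^ lam * Real.exp (-x^3 - t/x)) with hG
  have hlam1 : lam + 1 ≠ 0 := by linarith
  have hF0 : F 0 = 0 := by
    simp [hF, Real.zero_rpow hlam1]
  have hFP : ∀ x : ℝ, F x = x ^ (lam+1) * (p^2).eval x * Real.exp (-x^3 - t/x) := by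
    intro x; simp [hF, eval_pow]
  have hcont : ContinuousWithinAt F (Ici (0:ℝ)) 0 := by
    unfold ContinuousWithinAt
    rw [hF0, ← Set.Ioi_insert, nhdsWithin_insert]
    apply Tendsto.sup
    · rw [tendsto_pure_left]
      intro s hs
      rw [hF0]
      exact mem_of_mem_nhds hs
    · have := aux_lim_zero t ht (lam+1) (p^2)
      apply this.congr
      intro x; rw [hFP]
  have htop : Tendsto F atTop (nhds 0) := by
    have := aux_lim_top t ht (lam+1) (p^2)
    apply this.congr
    intro x; rw [hFP]
  have hderiv : ∀ x ∈ Ioi (0:ℝ), HasDerivAt F (G x) x := by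
    intro x hx
    have hx0 : (0:ℝ) < x := hx
    have hu : HasDerivAt (fun y : ℝ => y ^ (lam+1)) ((lam+1) * x ^ lam) x := by
      have := Real.hasDerivAt_rpow_const (x := x) (p := lam+1) (Or.inl hx0.ne')
      simpa using this
    have hv : HasDerivAt (fun y : ℝ => (p.eval y)^2) (2 * p.eval x * (derivative p).eval x) x := by
      have := (p.hasDerivAt x).fun_pow 2
      simpa using this
    have hi : HasDerivAt (fun y : ℝ => -y^3 - t/y) (-(3*x^2) + t/x^2) x := by
      have h1 : HasDerivAt (fun y : ℝ => y^3) (3*x^2) x := by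
        simpa using hasDerivAt_pow 3 x
      have h2 : HasDerivAt (fun y : ℝ => t/y) (-(t/x^2)) x := by
        have h0 := (hasDerivAt_inv hx0.ne').const_mul t
        have heq : (fun y : ℝ => t / y) = fun y => t * y⁻¹ := by
          funext y; rw [div_eq_mul_inv]
        rw [heq]
        refine h0.congr_deriv ?_
        ring
      refine (h1.fun_neg.fun_sub h2).congr_deriv ?_
      ring
    have he : HasDerivAt (fun y : ℝ => Real.exp (-y^3 - t/y))
        (Real.exp (-x^3 - t/x) * (-(3*x^2) + t/x^2)) x := by
      simpa [mul_comm] using hi.exp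
    have hall := (hu.fun_mul hv).fun_mul he
    refine hall.congr_deriv ?_
    rw [hG]
    have hxl : x ^ (lam+1) = x ^ lam * x := Real.rpow_add_one hx0.ne' lam
    simp only []
    rw [hxl]
    have hx0' : x ≠ 0 := hx0.ne'
    field_simp
  have hint : IntegrableOn G (Ioi 0) := by
    set Q : Polynomial ℝ := Polynomial.C (lam+1) * p^2 + 2*Polynomial.X*p*(derivative p)
      - Polynomial.C 3 * Polynomial.X^3 * p^2 with hQ
    have h1 := aux_int_poly t ht lam Q
    have h2 := (aux_int_poly t ht (lam-1) (p^2)).const_mul t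
    apply MeasureTheory.IntegrableOn.congr_fun (h1.add h2) _ measurableSet_Ioi
    intro x hx
    have hx0 : (0:ℝ) < x := hx
    have hxl : x ^ (lam-1:ℝ) = x ^ lam / x := by
      rw [Real.rpow_sub hx0, Real.rpow_one]
    simp only [Pi.add_apply, hQ, eval_add, eval_sub, eval_mul, eval_pow, eval_C, eval_X,
      eval_ofNat, hG, hxl]
    have hx0' : x ≠ 0 := hx0.ne'
    field_simp
    ring
  have := MeasureTheory.integral_Ioi_of_hasDerivAt_of_tendsto hcont hderiv hint htop
  rw [hF0, sub_zero] at this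
  exact this

lemma aux_int_w (lam t : ℝ) (ht : 0 < t) (w : ℝ → ℝ)
    (hw : ∀ x : ℝ, 0 < x → w x = x ^ lam * Real.exp (-x ^ 3 - t / x))
    (q : Polynomial ℝ) :
    IntegrableOn (fun x : ℝ => q.eval x * w x) (Ioi 0) := by
  apply MeasureTheory.IntegrableOn.congr_fun (aux_int_poly t ht lam q) _ measurableSet_Ioi
  intro x hx
  have hx0 : (0:ℝ) < x := hx
  dsimp only
  rw [hw x hx0]
  ring

lemma aux_int_w_inv (lam t : ℝ) (ht : 0 < t) (w : ℝ → ℝ)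
    (hw : ∀ x : ℝ, 0 < x → w x = x ^ lam * Real.exp (-x ^ 3 - t / x))
    (q : Polynomial ℝ) :
    IntegrableOn (fun x : ℝ => x⁻¹ * q.eval x * w x) (Ioi 0) := by
  apply MeasureTheory.IntegrableOn.congr_fun (aux_int_poly t ht (lam - 1) q) _ measurableSet_Ioi
  intro x hx
  have hx0 : (0:ℝ) < x := hx
  dsimp only
  rw [hw x hx0, Real.rpow_sub hx0, Real.rpow_one]
  field_simp

lemma aux_key (lam t : ℝ) (hlam : -1 < lam) (ht : 0 < t) (w : ℝ → ℝ)
    (hw : ∀ x : ℝ, 0 < x → w x = x ^ lam * Real.exp (-x ^ 3 - t / x))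
    (p : Polynomial ℝ) :
    (lam + 1) * (∫ x in Ioi (0:ℝ), (p * p).eval x * w x)
      + 2 * (∫ x in Ioi (0:ℝ), (Polynomial.X * p * derivative p).eval x * w x)
      - 3 * (∫ x in Ioi (0:ℝ), (Polynomial.X ^ 3 * p * p).eval x * w x)
      + t * (∫ x in Ioi (0:ℝ), x⁻¹ * (p.eval x)^2 * w x) = 0 := by
  have i1 := (aux_int_w lam t ht w hw (p * p)).const_mul (lam + 1)
  have i2 := (aux_int_w lam t ht w hw (Polynomial.X * p * derivative p)).const_mul 2
  have i3 := (aux_int_w lam t ht w hw (Polynomial.X ^ 3 * p * p)).const_mul (-3)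
  have i4 : IntegrableOn (fun x : ℝ => t * (x⁻¹ * (p.eval x)^2 * w x)) (Ioi 0) := by
    have := (aux_int_w_inv lam t ht w hw (p ^ 2)).const_mul t
    apply MeasureTheory.IntegrableOn.congr_fun this _ measurableSet_Ioi
    intro x hx
    simp [eval_pow]
  have i12 : Integrable (fun x : ℝ => (lam + 1) * ((p * p).eval x * w x)
      + 2 * ((Polynomial.X * p * derivative p).eval x * w x)) (volume.restrict (Ioi 0)) := by
    exact i1.add i2
  have i123 : Integrable (fun x : ℝ => (lam + 1) * ((p * p).eval x * w x)
      + 2 * ((Polynomial.X * p * derivative p).eval x * w x)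
      + (-3) * ((Polynomial.X ^ 3 * p * p).eval x * w x)) (volume.restrict (Ioi 0)) := by
    exact i12.add i3
  have hsum : ∫ x in Ioi (0:ℝ),
      ((lam + 1) * ((p * p).eval x * w x) + 2 * ((Polynomial.X * p * derivative p).eval x * w x)
        + (-3) * ((Polynomial.X ^ 3 * p * p).eval x * w x)
        + t * (x⁻¹ * (p.eval x)^2 * w x)) = 0 := by
    refine Eq.trans ?_ (aux_ibp lam t hlam ht p)
    apply setIntegral_congr_fun measurableSet_Ioi
    intro x hx
    have hx0 : (0:ℝ) < x := hx
    dsimp only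
    rw [hw x hx0]
    simp only [eval_mul, eval_pow, eval_X]
    have hx0' : x ≠ 0 := hx0.ne'
    field_simp
    ring
  rw [MeasureTheory.integral_add i123 i4,
      MeasureTheory.integral_add i12 i3,
      MeasureTheory.integral_add i1 i2] at hsum
  rw [MeasureTheory.integral_const_mul, MeasureTheory.integral_const_mul,
      MeasureTheory.integral_const_mul, MeasureTheory.integral_const_mul] at hsum
  linarith [hsum]

theorem stmt_5
    (lam t : ℝ) (hlam : -1 < lam) (ht : 0 < t)
    (w : ℝ → ℝ)
    (hw : ∀ x : ℝ, 0 < x → w x = x ^ lam * Real.exp (-x ^ 3 - t / x))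
    (P : ℕ → Polynomial ℝ) (h : ℕ → ℝ) (α β : ℕ → ℝ)
    (hP : ∀ n, (P n).Monic ∧ (P n).natDegree = n)
    (hpos : ∀ n, 0 < h n)
    (horth : ∀ m n, ∫ x in Set.Ioi (0 : ℝ),
        (P m).eval x * (P n).eval x * w x = if m = n then h n else 0)
    (hP0 : P 0 = 1)
    (hrec : ∀ n, 1 ≤ n → ∀ x : ℝ, x * (P n).eval x
        = (P (n + 1)).eval x + α n * (P n).eval x + β n * (P (n - 1)).eval x)
    (hrec0 : ∀ x : ℝ, x * (P 0).eval x = (P 1).eval x + α 0 * (P 0).eval x)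
    (Rs : ℕ → ℝ)
    (hRs : ∀ m : ℕ, Rs m = (t / h m) * ∫ y in Set.Ioi (0 : ℝ),
        y⁻¹ * ((P m).eval y) ^ 2 * w y)
    (R : ℕ → ℝ) (hR : ∀ m : ℕ, R m = 3 * ((α m) ^ 2 + β m + β (m + 1)))
    (r : ℕ → ℝ)
    (hr : ∀ m : ℕ, 1 ≤ m → r m = 3 * (α m + α (m - 1)) * β m - (m : ℝ))
    : ∀ n : ℕ, 1 ≤ n → Rs n = r n + r (n + 1) + α n * R n - lam := by
  intro n hn
  set L : Polynomial ℝ → ℝ := fun q => ∫ x in Set.Ioi (0:ℝ), q.eval x * w x with hL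
  have Lint : ∀ q : Polynomial ℝ, IntegrableOn (fun x : ℝ => q.eval x * w x) (Set.Ioi 0) :=
    fun q => aux_int_w lam t ht w hw q
  have L_add : ∀ q1 q2 : Polynomial ℝ, L (q1 + q2) = L q1 + L q2 := by
    intro q1 q2
    simp only [hL, eval_add, add_mul]
    exact MeasureTheory.integral_add (Lint q1) (Lint q2)
  have L_Cmul : ∀ (a : ℝ) (q : Polynomial ℝ), L (Polynomial.C a * q) = a * L q := by
    intro a q
    simp only [hL, eval_mul, eval_C, mul_assoc]
    exact MeasureTheory.integral_const_mul a _
  have L_PP : ∀ i j, L (P i * P j) = if i = j then h j else 0 := by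
    intro i j
    simp only [hL, eval_mul]
    exact horth i j
  have Ld : ∀ i, L (P i * P i) = h i := by
    intro i; rw [L_PP]; simp
  have Lz : ∀ i j, i ≠ j → L (P i * P j) = 0 := by
    intro i j hij; rw [L_PP]; simp [hij]
  -- orthogonality to all lower degree polynomials
  have L_lower : ∀ (m : ℕ) (q : Polynomial ℝ), q.degree < (m : ℕ) → L (P m * q) = 0 := by
    have main : ∀ d : ℕ, ∀ (m : ℕ) (q : Polynomial ℝ), q.natDegree ≤ d →
        q.degree < (m : ℕ) → L (P m * q) = 0 := by
      intro d
      induction d with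
      | zero =>
        intro m q hdeg hlt
        have hq : q = Polynomial.C (q.coeff 0) := Polynomial.eq_C_of_natDegree_le_zero hdeg
        rcases Nat.eq_zero_or_pos m with hm | hm
        · subst hm
          have hq0 : q = 0 := by
            have : q.degree < 0 := by exact_mod_cast hlt
            exact Polynomial.degree_eq_bot.mp (by
              exact Nat.WithBot.lt_zero_iff.mp (by exact_mod_cast this))
          rw [hq0, mul_zero]
          simp [hL]
        · have hsplit : P m * q = Polynomial.C (q.coeff 0) * (P m * P 0) := by
            rw [hP0]
            nth_rewrite 1 [hq]
            ring
          rw [hsplit, L_Cmul, Lz m 0 hm.ne']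
          ring
      | succ d ih =>
        intro m q hdeg hlt
        by_cases hq0 : q = 0
        · rw [hq0, mul_zero]; simp [hL]
        by_cases hdd : q.natDegree ≤ d
        · exact ih m q hdd hlt
        push_neg at hdd
        have hqd : q.natDegree = d + 1 := le_antisymm hdeg hdd
        set c := q.leadingCoeff with hc
        have hcne : c ≠ 0 := Polynomial.leadingCoeff_ne_zero.mpr hq0
        set q' := q - Polynomial.C c * P (d+1) with hq'
        have hdegP : (P (d+1)).degree = ((d+1 : ℕ) : WithBot ℕ) := by
          rw [Polynomial.degree_eq_natDegree (hP (d+1)).1.ne_zero, (hP (d+1)).2]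
        have hdegq : q.degree = ((d+1 : ℕ) : WithBot ℕ) := by
          rw [Polynomial.degree_eq_natDegree hq0, hqd]
        have hdeg2 : q.degree = (Polynomial.C c * P (d+1)).degree := by
          rw [Polynomial.degree_C_mul hcne, hdegP, hdegq]
        have hlead : q.leadingCoeff = (Polynomial.C c * P (d+1)).leadingCoeff := by
          rw [Polynomial.leadingCoeff_mul, Polynomial.leadingCoeff_C,
            Polynomial.Monic.leadingCoeff (hP (d+1)).1, mul_one]
        have hdeglt : q'.degree < q.degree := Polynomial.degree_sub_lt hdeg2 hq0 hlead
        have hmd : d + 1 < m := by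
          have := hdegq ▸ hlt
          exact_mod_cast this
        have hq'le : q'.natDegree ≤ d := by
          have : q'.degree < ((d+1 : ℕ) : WithBot ℕ) := hdegq ▸ hdeglt
          have h2 : q'.degree ≤ (d : ℕ) := by
            exact Polynomial.degree_le_iff_coeff_zero q' d |>.mpr (by
              intro k hk
              exact Polynomial.coeff_eq_zero_of_degree_lt (lt_of_lt_of_le this (by exact_mod_cast hk)))
          exact Polynomial.natDegree_le_iff_degree_le.mpr h2
        have hq'lt : q'.degree < (m : ℕ) := lt_trans hdeglt (hdegq ▸ (by exact_mod_cast hmd))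
        have hsplit : P m * q = Polynomial.C c * (P m * P (d+1)) + P m * q' := by
          rw [hq']; ring
        rw [hsplit, L_add, L_Cmul, Lz m (d+1) (by omega), ih m q' hq'le hq'lt]
        ring
    intro m q hlt
    exact main q.natDegree m q le_rfl hlt
  -- unified recurrence
  set b : ℕ → ℝ := fun m => if m = 0 then 0 else β m with hb
  have Xrec : ∀ m : ℕ, (Polynomial.X : Polynomial ℝ) * P m
      = P (m+1) + Polynomial.C (α m) * P m + Polynomial.C (b m) * P (m-1) := by
    intro m
    apply Polynomial.funext
    intro x
    simp only [eval_add, eval_mul, eval_X, eval_C]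
    rcases Nat.eq_zero_or_pos m with hm | hm
    · subst hm
      simp only [hb, if_pos rfl, zero_mul, add_zero]
      exact hrec0 x
    · simp only [hb, if_neg hm.ne']
      exact hrec m hm x
  -- h relation
  have hβrel : ∀ m : ℕ, 1 ≤ m → β m * h (m-1) = h m := by
    intro m hm
    have hbm : b m = β m := by simp only [hb]; rw [if_neg (by omega)]
    have e1 : L ((Polynomial.X * P m) * P (m-1)) = β m * h (m-1) := by
      rw [Xrec m, add_mul, add_mul, L_add, L_add, mul_assoc, mul_assoc, L_Cmul, L_Cmul,
        Lz (m+1) (m-1) (by omega), Lz m (m-1) (by omega), Ld (m-1), hbm]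
      ring
    have e2 : L ((Polynomial.X * P (m-1)) * P m) = h m := by
      have hXm := Xrec (m-1)
      rw [Nat.sub_add_cancel hm] at hXm
      rw [hXm, add_mul, add_mul, L_add, L_add, mul_assoc, mul_assoc, L_Cmul, L_Cmul,
        Ld m, Lz (m-1) m (by omega), Lz (m-1-1) m (by omega)]
      ring
    have e3 : (Polynomial.X * P m) * P (m-1) = (Polynomial.X * P (m-1)) * P m := by ring
    rw [e3, e2] at e1
    exact e1.symm
  -- the three basic recurrences around n
  have hbn : b n = β n := by simp only [hb]; rw [if_neg (by omega)]
  have hbn1 : b (n+1) = β (n+1) := by simp [hb]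
  have hA : (Polynomial.X : Polynomial ℝ) * P n
      = P (n+1) + Polynomial.C (α n) * P n + Polynomial.C (β n) * P (n-1) := by
    rw [Xrec n, hbn]
  have hB : (Polynomial.X : Polynomial ℝ) * P (n+1)
      = P (n+2) + Polynomial.C (α (n+1)) * P (n+1) + Polynomial.C (β (n+1)) * P n := by
    have := Xrec (n+1)
    simpa [hbn1] using this
  have hC2 : (Polynomial.X : Polynomial ℝ) * P (n-1)
      = P n + Polynomial.C (α (n-1)) * P (n-1) + Polynomial.C (b (n-1)) * P (n-1-1) := by
    have := Xrec (n-1)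
    rwa [Nat.sub_add_cancel hn] at this
  -- second order recurrence
  have hX2 : (Polynomial.X : Polynomial ℝ)^2 * P n
      = P (n+2) + (Polynomial.C (α (n+1)) + Polynomial.C (α n)) * P (n+1)
        + (Polynomial.C (β (n+1)) + Polynomial.C (α n)^2 + Polynomial.C (β n)) * P n
        + (Polynomial.C (α n) * Polynomial.C (β n)
            + Polynomial.C (β n) * Polynomial.C (α (n-1))) * P (n-1)
        + Polynomial.C (β n) * Polynomial.C (b (n-1)) * P (n-1-1) := by
    linear_combination (Polynomial.X + Polynomial.C (α n)) * hA + hB + Polynomial.C (β n) * hC2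
  -- full expansion of X^3 * P n * P n
  have hE3 : (Polynomial.X : Polynomial ℝ)^3 * P n * P n
      = Polynomial.C 1 * (P (n+1) * P (n+2))
      + Polynomial.C (α (n+1) + α n) * (P (n+1) * P (n+1))
      + Polynomial.C (β (n+1) + α n^2 + β n) * (P (n+1) * P n)
      + Polynomial.C (α n * β n + β n * α (n-1)) * (P (n+1) * P (n-1))
      + Polynomial.C (β n * b (n-1)) * (P (n+1) * P (n-1-1))
      + Polynomial.C (α n) * (P n * P (n+2))
      + Polynomial.C (α n * (α (n+1) + α n)) * (P n * P (n+1))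
      + Polynomial.C (α n * (β (n+1) + α n^2 + β n)) * (P n * P n)
      + Polynomial.C (α n * (α n * β n + β n * α (n-1))) * (P n * P (n-1))
      + Polynomial.C (α n * (β n * b (n-1))) * (P n * P (n-1-1))
      + Polynomial.C (β n) * (P (n-1) * P (n+2))
      + Polynomial.C (β n * (α (n+1) + α n)) * (P (n-1) * P (n+1))
      + Polynomial.C (β n * (β (n+1) + α n^2 + β n)) * (P (n-1) * P n)
      + Polynomial.C (β n * (α n * β n + β n * α (n-1))) * (P (n-1) * P (n-1))
      + Polynomial.C (β n * (β n * b (n-1))) * (P (n-1) * P (n-1-1)) := by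
    simp only [Polynomial.C_mul, Polynomial.C_add, Polynomial.C_pow, Polynomial.C_1]
    linear_combination ((Polynomial.X:Polynomial ℝ)^2 * P n) * hA
      + (P (n+1) + Polynomial.C (α n) * P n + Polynomial.C (β n) * P (n-1)) * hX2
  -- special vanishing term
  have hspec : ∀ c : ℝ, (c * b (n-1)) * L (P (n-1) * P (n-1-1)) = 0 := by
    intro c
    by_cases h1 : n = 1
    · subst h1
      simp [hb]
    · rw [Lz (n-1) (n-1-1) (by omega)]
      ring
  -- value of the cubic moment
  have hL3 : L ((Polynomial.X : Polynomial ℝ)^3 * P n * P n)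
      = (α (n+1) + α n) * h (n+1) + (α n * (β (n+1) + α n^2 + β n)) * h n
        + (β n * (α n * β n + β n * α (n-1))) * h (n-1) := by
    rw [hE3]
    rw [L_add, L_add, L_add, L_add, L_add, L_add, L_add, L_add, L_add, L_add, L_add,
      L_add, L_add, L_add]
    rw [L_Cmul, L_Cmul, L_Cmul, L_Cmul, L_Cmul, L_Cmul, L_Cmul, L_Cmul, L_Cmul, L_Cmul,
      L_Cmul, L_Cmul, L_Cmul, L_Cmul, L_Cmul]
    rw [Lz (n+1) (n+2) (by omega), Ld (n+1), Lz (n+1) n (by omega),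
      Lz (n+1) (n-1) (by omega), Lz (n+1) (n-1-1) (by omega),
      Lz n (n+2) (by omega), Lz n (n+1) (by omega), Ld n,
      Lz n (n-1) (by omega), Lz n (n-1-1) (by omega),
      Lz (n-1) (n+2) (by omega), Lz (n-1) (n+1) (by omega), Lz (n-1) n (by omega),
      Ld (n-1)]
    linear_combination hspec (β n * β n)
  -- value of the derivative moment
  have hD : L ((Polynomial.X : Polynomial ℝ) * P n * derivative (P n)) = (n : ℝ) * h n := by
    set q : Polynomial ℝ := Polynomial.X * derivative (P n) - Polynomial.C (n:ℝ) * P n with hq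
    have hdeg : q.degree < (n : ℕ) := by
      rw [Polynomial.degree_lt_iff_coeff_zero]
      intro m hm
      obtain ⟨k, rfl⟩ : ∃ k, m = k + 1 := ⟨m - 1, by omega⟩
      simp only [hq, Polynomial.coeff_sub, Polynomial.coeff_C_mul, Polynomial.coeff_X_mul,
        Polynomial.coeff_derivative]
      rcases eq_or_lt_of_le hm with he | hlt
      · have hcoeff : (P n).coeff (k+1) = 1 := by
          have := (hP n).1
          have h2 : (P n).coeff ((P n).natDegree) = 1 := this.coeff_natDegree
          rw [(hP n).2] at h2
          rw [← he]
          exact h2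
        rw [hcoeff]
        have hc : ((k:ℝ) + 1) = (n:ℝ) := by exact_mod_cast he.symm
        rw [hc]
        ring
      · have hcoeff : (P n).coeff (k+1) = 0 := by
          apply Polynomial.coeff_eq_zero_of_natDegree_lt
          rw [(hP n).2]
          omega
        rw [hcoeff]
        ring
    have hsplit : (Polynomial.X : Polynomial ℝ) * P n * derivative (P n)
        = Polynomial.C (n:ℝ) * (P n * P n) + P n * q := by
      rw [hq]; ring
    rw [hsplit, L_add, L_Cmul, Ld n, L_lower n q hdeg]
    ring
  -- assemble
  have kk : (lam + 1) * L (P n * P n)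
      + 2 * L ((Polynomial.X : Polynomial ℝ) * P n * derivative (P n))
      - 3 * L ((Polynomial.X : Polynomial ℝ)^3 * P n * P n)
      + t * (∫ x in Set.Ioi (0:ℝ), x⁻¹ * ((P n).eval x)^2 * w x) = 0 := by
    simp only [hL]
    exact aux_key lam t hlam ht w hw (P n)
  rw [Ld n, hD, hL3] at kk
  have hb1 := hβrel (n+1) (by omega)
  simp only [Nat.add_sub_cancel] at hb1
  have hb0 := hβrel n hn
  have hne : h n ≠ 0 := (hpos n).ne'
  rw [hRs n, hr n hn, hr (n+1) (by omega), hR n]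
  simp only [Nat.add_sub_cancel]
  rw [div_mul_eq_mul_div, div_eq_iff hne]
  push_cast
  linear_combination kk - 3*(α (n+1) + α n)*hb1 + 3*(β n * (α n + α (n-1)))*hb0
end

section
/- For every n ≥ 1, the auxiliary quantities satisfy r_n*(r_n* − t) = β_n R_n* R_{n−1}*. -/
open MeasureTheory Polynomial Real Filter

set_option maxHeartbeats 2000000 in
theorem stmt_7
    (lam t : ℝ) (hlam : -1 < lam) (ht : 0 < t)
    (w : ℝ → ℝ)
    (hw : ∀ x : ℝ, 0 < x → w x = x ^ lam * Real.exp (-x ^ 3 - t / x))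
    (P : ℕ → Polynomial ℝ) (h : ℕ → ℝ) (α β : ℕ → ℝ)
    (hP : ∀ n, (P n).Monic ∧ (P n).natDegree = n)
    (hpos : ∀ n, 0 < h n)
    (horth : ∀ m n, ∫ x in Set.Ioi (0 : ℝ),
        (P m).eval x * (P n).eval x * w x = if m = n then h n else 0)
    (hP0 : P 0 = 1)
    (hrec : ∀ n, 1 ≤ n → ∀ x : ℝ, x * (P n).eval x
        = (P (n + 1)).eval x + α n * (P n).eval x + β n * (P (n - 1)).eval x)
    (hrec0 : ∀ x : ℝ, x * (P 0).eval x = (P 1).eval x + α 0 * (P 0).eval x)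
    (Rs : ℕ → ℝ)
    (hRs : ∀ m : ℕ, Rs m = (t / h m) * ∫ y in Set.Ioi (0 : ℝ),
        y⁻¹ * ((P m).eval y) ^ 2 * w y)
    (rs : ℕ → ℝ)
    (hrs : ∀ m : ℕ, 1 ≤ m → rs m = (t / h (m - 1)) * ∫ y in Set.Ioi (0 : ℝ),
        y⁻¹ * (P m).eval y * (P (m - 1)).eval y * w y)
    : ∀ n : ℕ, 1 ≤ n → rs n * (rs n - t) = β n * (Rs n * Rs (n - 1)) := by
  classical
  -- positivity of the weight on (0, ∞)
  have hwpos : ∀ x : ℝ, x ∈ Set.Ioi (0:ℝ) → 0 < w x := by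
    intro x hx
    rw [hw x hx]
    have : (0:ℝ) < x ^ lam := Real.rpow_pos_of_pos hx lam
    positivity
  -- a.e. strong measurability of the weight on the restricted measure
  have hmw : AEStronglyMeasurable w (volume.restrict (Set.Ioi (0:ℝ))) := by
    have hf : Measurable fun x : ℝ => x ^ lam * Real.exp (-x ^ 3 - t / x) := by fun_prop
    refine hf.aestronglyMeasurable.congr ?_
    filter_upwards [ae_restrict_mem measurableSet_Ioi] with x hx
    exact (hw x hx).symm
  have hmp : ∀ p : Polynomial ℝ, AEStronglyMeasurable (fun x => p.eval x * w x)
      (volume.restrict (Set.Ioi (0:ℝ))) := fun p =>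
    (p.continuous.measurable.aestronglyMeasurable).mul hmw
  -- integrability of P m * P k * w
  have hdiag : ∀ m, IntegrableOn (fun x => (P m).eval x * (P m).eval x * w x) (Set.Ioi 0) := by
    intro m
    by_contra hc
    have h1 := horth m m
    rw [if_pos rfl] at h1
    rw [integral_undef hc] at h1
    exact absurd h1.symm (ne_of_gt (hpos m))
  have hInt2 : ∀ m k, IntegrableOn (fun x => (P m).eval x * (P k).eval x * w x)
      (Set.Ioi 0) := by
    intro m k
    refine Integrable.mono' ((hdiag m).add (hdiag k))
      ((((P m).continuous.measurable.aestronglyMeasurable).mul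
        ((P k).continuous.measurable.aestronglyMeasurable)).mul hmw) ?_
    filter_upwards [ae_restrict_mem measurableSet_Ioi] with x hx
    have hw0 : 0 ≤ w x := (hwpos x hx).le
    rw [Real.norm_eq_abs, abs_mul, abs_of_nonneg hw0, abs_mul]
    simp only [Pi.add_apply]
    nlinarith [mul_nonneg (sq_nonneg (|(P m).eval x| - |(P k).eval x|)) hw0,
      abs_mul_abs_self ((P m).eval x), abs_mul_abs_self ((P k).eval x),
      mul_nonneg (mul_nonneg (abs_nonneg ((P m).eval x)) (abs_nonneg ((P k).eval x))) hw0]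
  -- integrability of p * w for any polynomial p
  have hIntPoly : ∀ p : Polynomial ℝ, IntegrableOn (fun x => p.eval x * w x) (Set.Ioi 0) := by
    have key : ∀ d : ℕ, ∀ p : Polynomial ℝ, p.natDegree ≤ d →
        IntegrableOn (fun x => p.eval x * w x) (Set.Ioi 0) := by
      intro d
      induction d with
      | zero =>
        intro p hp
        have hp' : p = C (p.coeff 0) := Polynomial.eq_C_of_natDegree_le_zero hp
        refine ((hInt2 0 0).const_mul (p.coeff 0)).congr ?_
        refine Filter.Eventually.of_forall fun x => ?_
        have hpe : p.eval x = p.coeff 0 := by conv_lhs => rw [hp']; rw [eval_C]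
        simp [hP0, hpe]
      | succ d ih =>
        intro p hp
        by_cases hd : p.natDegree ≤ d
        · exact ih p hd
        set c := p.coeff (d+1) with hc
        set q := p - C c * P (d+1) with hq
        have hqd : q.natDegree ≤ d := by
          rw [natDegree_le_iff_coeff_eq_zero]
          intro N hN
          rw [hq]
          simp only [coeff_sub, coeff_C_mul]
          rcases eq_or_lt_of_le (Nat.succ_le_of_lt hN) with h1 | h1
          · have hco : (P (d+1)).coeff (d+1) = 1 := by
              have := (hP (d+1)).1.coeff_natDegree
              rwa [(hP (d+1)).2] at this
            rw [← h1, hco, mul_one, hc, sub_self]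
          · rw [coeff_eq_zero_of_natDegree_lt (lt_of_le_of_lt hp h1),
              coeff_eq_zero_of_natDegree_lt (by rw [(hP (d+1)).2]; exact h1), mul_zero, sub_zero]
        have h1 : IntegrableOn (fun x => (P (d+1)).eval x * w x) (Set.Ioi 0) := by
          refine (hInt2 (d+1) 0).congr (Filter.Eventually.of_forall fun x => ?_)
          rw [hP0]; simp
        refine ((h1.const_mul c).add (ih q hqd)).congr
          (Filter.Eventually.of_forall fun x => ?_)
        simp only [Pi.add_apply, hq, eval_sub, eval_mul, eval_C]
        ring
    exact fun p => key p.natDegree p le_rfl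
  have hIntPoly2 : ∀ p q : Polynomial ℝ,
      IntegrableOn (fun x => p.eval x * q.eval x * w x) (Set.Ioi 0) := by
    intro p q
    refine (hIntPoly (p * q)).congr (Filter.Eventually.of_forall fun x => ?_)
    simp only [eval_mul, mul_assoc]
  -- orthogonality against lower-degree polynomials
  have Lorth : ∀ (n : ℕ) (q : Polynomial ℝ), (q.natDegree < n ∨ q = 0) →
      ∫ x in Set.Ioi (0:ℝ), q.eval x * (P n).eval x * w x = 0 := by
    have key : ∀ d : ℕ, ∀ (q : Polynomial ℝ) (n : ℕ), q.natDegree ≤ d → d < n →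
        ∫ x in Set.Ioi (0:ℝ), q.eval x * (P n).eval x * w x = 0 := by
      intro d
      induction d with
      | zero =>
        intro q n hq hn
        have hq' : q = C (q.coeff 0) := Polynomial.eq_C_of_natDegree_le_zero hq
        have heq : ∀ x : ℝ, q.eval x * (P n).eval x * w x
            = q.coeff 0 * ((P 0).eval x * (P n).eval x * w x) := by
          intro x
          conv_lhs => rw [hq']
          rw [hP0]; simp; ring
        rw [integral_congr_ae (Filter.Eventually.of_forall heq), integral_const_mul,
          horth 0 n, if_neg (by omega), mul_zero]
      | succ d ih =>
        intro q n hq hn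
        set c := q.coeff (d+1) with hc
        set r := q - C c * P (d+1) with hr
        have hrd : r.natDegree ≤ d := by
          rw [natDegree_le_iff_coeff_eq_zero]
          intro N hN
          rw [hr]
          simp only [coeff_sub, coeff_C_mul]
          rcases eq_or_lt_of_le (Nat.succ_le_of_lt hN) with h1 | h1
          · have hco : (P (d+1)).coeff (d+1) = 1 := by
              have := (hP (d+1)).1.coeff_natDegree
              rwa [(hP (d+1)).2] at this
            rw [← h1, hco, mul_one, hc, sub_self]
          · rw [coeff_eq_zero_of_natDegree_lt (lt_of_le_of_lt hq h1),
              coeff_eq_zero_of_natDegree_lt (by rw [(hP (d+1)).2]; exact h1), mul_zero, sub_zero]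
        have heq : ∀ x : ℝ, q.eval x * (P n).eval x * w x
            = c * ((P (d+1)).eval x * (P n).eval x * w x)
              + r.eval x * (P n).eval x * w x := by
          intro x
          have hqx : q.eval x = r.eval x + c * (P (d+1)).eval x := by
            simp only [hr, eval_sub, eval_mul, eval_C]; ring
          rw [hqx]; ring
        rw [integral_congr_ae (Filter.Eventually.of_forall heq),
          integral_add ((hInt2 (d+1) n).const_mul c) (hIntPoly2 r (P n)),
          integral_const_mul, horth (d+1) n, if_neg (by omega),
          ih r n hrd (by omega), mul_zero, add_zero]
    intro n q hq
    rcases hq with hq | hq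
    · exact key q.natDegree q n le_rfl hq
    · subst hq
      simp
  -- integral of monic degree-n polynomial against P n
  have Lmonic : ∀ (n : ℕ) (q : Polynomial ℝ), q.Monic → q.natDegree = n →
      ∫ x in Set.Ioi (0:ℝ), q.eval x * (P n).eval x * w x = h n := by
    intro n q hqm hqd
    have heq : ∀ x : ℝ, q.eval x * (P n).eval x * w x
        = (q - P n).eval x * (P n).eval x * w x + (P n).eval x * (P n).eval x * w x := by
      intro x; simp only [eval_sub]; ring
    rw [integral_congr_ae (Filter.Eventually.of_forall heq),
      integral_add (hIntPoly2 (q - P n) (P n)) (hInt2 n n)]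
    have h0 : ∫ x in Set.Ioi (0:ℝ), (q - P n).eval x * (P n).eval x * w x = 0 := by
      refine Lorth n (q - P n) ?_
      by_cases hqe : q = P n
      · right; rw [hqe, sub_self]
      · left
        have hdq : q.degree = (P n).degree := by
          rw [Polynomial.degree_eq_natDegree hqm.ne_zero,
            Polynomial.degree_eq_natDegree (hP n).1.ne_zero, hqd, (hP n).2]
        have hlt := Polynomial.degree_sub_lt hdq hqm.ne_zero
          (by rw [hqm.leadingCoeff, (hP n).1.leadingCoeff])
        rw [natDegree_lt_iff_degree_lt (sub_ne_zero.mpr hqe)]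
        calc (q - P n).degree < q.degree := hlt
          _ = (n : WithBot ℕ) := by
            rw [Polynomial.degree_eq_natDegree hqm.ne_zero, hqd]
    rw [h0, zero_add]
    have := horth n n
    rwa [if_pos rfl] at this
  -- integrability of y⁻¹ * p * w on (0,∞)
  have hIntInv : ∀ p : Polynomial ℝ,
      IntegrableOn (fun y => y⁻¹ * p.eval y * w y) (Set.Ioi 0) := by
    intro p
    have hkey : ∀ y : ℝ, 0 < y → y⁻¹ * Real.exp (-(t/y)) ≤ 1/t := by
      intro y hy
      have h1 : t/y ≤ Real.exp (t/y) := by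
        have := Real.add_one_le_exp (t/y); linarith
      have key2 : t/y * (Real.exp (t/y))⁻¹ ≤ 1 := by
        calc t/y * (Real.exp (t/y))⁻¹ ≤ Real.exp (t/y) * (Real.exp (t/y))⁻¹ :=
              mul_le_mul_of_nonneg_right h1 (inv_nonneg.mpr (Real.exp_pos _).le)
          _ = 1 := mul_inv_cancel₀ (Real.exp_pos _).ne'
      have hrw : y⁻¹ * Real.exp (-(t/y)) = (t/y * (Real.exp (t/y))⁻¹) / t := by
        rw [Real.exp_neg]
        field_simp
      rw [hrw]
      gcongr
    obtain ⟨M, hM⟩ := (isCompact_Icc : IsCompact (Set.Icc (0:ℝ) 1)).exists_bound_of_continuousOn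
      p.continuous.continuousOn
    have hIoc : IntegrableOn (fun y => y⁻¹ * p.eval y * w y) (Set.Ioc 0 1) := by
      have hg : IntegrableOn (fun y : ℝ => M/t * y ^ lam) (Set.Ioc 0 1) := by
        have h0 : IntegrableOn (fun y : ℝ => y ^ lam) (Set.Ioc 0 1) := by
          rw [integrableOn_Ioc_iff_integrableOn_Ioo]
          exact (intervalIntegral.integrableOn_Ioo_rpow_iff zero_lt_one).mpr hlam
        exact h0.const_mul _
      refine Integrable.mono' hg
        ((measurable_inv.aestronglyMeasurable.mul
          p.continuous.measurable.aestronglyMeasurable).mul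
          (hmw.mono_measure (Measure.restrict_mono Set.Ioc_subset_Ioi_self le_rfl))) ?_
      filter_upwards [ae_restrict_mem measurableSet_Ioc] with y hy
      have hy0 : (0:ℝ) < y := hy.1
      have hwy : w y = y ^ lam * (Real.exp (-y^3) * Real.exp (-(t/y))) := by
        rw [hw y hy0, sub_eq_add_neg, Real.exp_add]
      have habs : |y⁻¹ * p.eval y * w y| = y⁻¹ * |p.eval y| * w y := by
        rw [abs_mul, abs_mul, abs_of_nonneg (inv_nonneg.mpr hy0.le),
          abs_of_nonneg (hwpos y hy.1).le]
      rw [Real.norm_eq_abs, habs]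
      have hple : |p.eval y| ≤ M := by
        have := hM y ⟨hy0.le, hy.2⟩
        rwa [Real.norm_eq_abs] at this
      have hexp3 : Real.exp (-y^3) ≤ 1 := by
        rw [Real.exp_le_one_iff]
        have : (0:ℝ) ≤ y^3 := by positivity
        linarith
      have hinv := hkey y hy0
      have hrp : (0:ℝ) ≤ y ^ lam := (Real.rpow_pos_of_pos hy0 lam).le
      have hM0 : 0 ≤ M := le_trans (abs_nonneg _) hple
      calc y⁻¹ * |p.eval y| * w y
          = (|p.eval y| * Real.exp (-y^3)) * (y⁻¹ * Real.exp (-(t/y))) * y ^ lam := by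
            rw [hwy]; ring
        _ ≤ (M * 1) * (1/t) * y ^ lam := by
            have e1 : |p.eval y| * Real.exp (-y^3) ≤ M * 1 :=
              mul_le_mul hple hexp3 (Real.exp_pos _).le hM0
            have e2 : (0:ℝ) ≤ y⁻¹ * Real.exp (-(t/y)) :=
              mul_nonneg (inv_nonneg.mpr hy0.le) (Real.exp_pos _).le
            have e3 : (0:ℝ) ≤ |p.eval y| * Real.exp (-y^3) :=
              mul_nonneg (abs_nonneg _) (Real.exp_pos _).le
            have e4 : (0:ℝ) ≤ M * 1 := by simpa using hM0
            exact mul_le_mul_of_nonneg_right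
              (mul_le_mul e1 hinv e2 e4) hrp
        _ = M/t * y ^ lam := by ring
    have hIoi : IntegrableOn (fun y => y⁻¹ * p.eval y * w y) (Set.Ioi 1) := by
      have hg : IntegrableOn (fun y => |p.eval y * w y|) (Set.Ioi 1) :=
        ((hIntPoly p).mono_set (Set.Ioi_subset_Ioi zero_le_one)).abs
      refine Integrable.mono' hg
        ((measurable_inv.aestronglyMeasurable.mul
          p.continuous.measurable.aestronglyMeasurable).mul
          (hmw.mono_measure (Measure.restrict_mono (Set.Ioi_subset_Ioi zero_le_one) le_rfl))) ?_
      filter_upwards [ae_restrict_mem measurableSet_Ioi] with y hy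
      have hy1 : (1:ℝ) < y := hy
      have hy0 : (0:ℝ) < y := lt_trans zero_lt_one hy1
      have hinv1 : y⁻¹ ≤ 1 := by
        nlinarith [inv_mul_cancel₀ hy0.ne', inv_pos.mpr hy0]
      rw [Real.norm_eq_abs, abs_mul, abs_mul, abs_mul,
        abs_of_nonneg (inv_nonneg.mpr hy0.le)]
      nlinarith [mul_nonneg (abs_nonneg (p.eval y)) (abs_nonneg (w y)),
        inv_pos.mpr hy0]
    have hUnion : Set.Ioc (0:ℝ) 1 ∪ Set.Ioi 1 = Set.Ioi 0 := Set.Ioc_union_Ioi_eq_Ioi zero_le_one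
    rw [← hUnion]
    exact hIoc.union hIoi
  -- algebraic split of P m by X
  have hPsplit : ∀ (m : ℕ) (y : ℝ), (P m).eval y = y * (P m /ₘ X).eval y + (P m).eval 0 := by
    intro m y
    conv_lhs => rw [← modByMonic_add_div (P m) X]
    rw [eval_add, eval_mul, eval_X, modByMonic_X, eval_C]
    ring
  have Fsplit : ∀ m k : ℕ, ∫ y in Set.Ioi (0:ℝ), y⁻¹ * (P m).eval y * (P k).eval y * w y
      = (∫ y in Set.Ioi (0:ℝ), (P m /ₘ X).eval y * (P k).eval y * w y)
        + (P m).eval 0 * ∫ y in Set.Ioi (0:ℝ), y⁻¹ * (P k).eval y * w y := by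
    intro m k
    have heq : ∀ᵐ y ∂(volume.restrict (Set.Ioi (0:ℝ))),
        y⁻¹ * (P m).eval y * (P k).eval y * w y
        = (P m /ₘ X).eval y * (P k).eval y * w y
          + (P m).eval 0 * (y⁻¹ * (P k).eval y * w y) := by
      filter_upwards [ae_restrict_mem measurableSet_Ioi] with y hy
      have hy0 : (0:ℝ) < y := hy
      have h1 : y⁻¹ * (P m).eval y = (P m /ₘ X).eval y + (P m).eval 0 * y⁻¹ := by
        rw [hPsplit m y]
        field_simp
      calc y⁻¹ * (P m).eval y * (P k).eval y * w y
          = (y⁻¹ * (P m).eval y) * ((P k).eval y * w y) := by ring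
        _ = ((P m /ₘ X).eval y + (P m).eval 0 * y⁻¹) * ((P k).eval y * w y) := by rw [h1]
        _ = _ := by ring
    rw [integral_congr_ae heq,
      integral_add (hIntPoly2 (P m /ₘ X) (P k)) ((hIntInv (P k)).const_mul _),
      integral_const_mul]
  have hQdeg : ∀ m : ℕ, (P m /ₘ X).natDegree = m - 1 := by
    intro m; rw [natDegree_divByMonic (P m) monic_X, (hP m).2, natDegree_X]
  have hQmonic : ∀ m : ℕ, 1 ≤ m → (P m /ₘ X).Monic := by
    intro m hm
    obtain ⟨m', rfl⟩ : ∃ m', m = m' + 1 := ⟨m - 1, (Nat.succ_pred_eq_of_pos hm).symm⟩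
    have h1 : (P (m'+1)).coeff (m'+1) = 1 := by
      have := (hP (m'+1)).1.coeff_natDegree
      rwa [(hP (m'+1)).2] at this
    have h2 : P (m'+1) = C ((P (m'+1)).eval 0) + X * (P (m'+1) /ₘ X) := by
      conv_lhs => rw [← modByMonic_add_div (P (m'+1)) X]
      rw [modByMonic_X]
    have h3 : (P (m'+1)).coeff (m'+1) = (P (m'+1) /ₘ X).coeff m' := by
      conv_lhs => rw [h2]
      rw [coeff_add, coeff_C, if_neg (by omega), coeff_X_mul, zero_add]
    have hlc : (P (m'+1) /ₘ X).leadingCoeff = 1 := by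
      rw [Polynomial.leadingCoeff, hQdeg (m'+1)]
      simp only [Nat.add_sub_cancel]
      rw [← h3, h1]
    exact hlc
  have hQorth : ∀ m n : ℕ, m ≤ n → 1 ≤ n →
      ∫ x in Set.Ioi (0:ℝ), (P m /ₘ X).eval x * (P n).eval x * w x = 0 := by
    intro m n hmn hn
    rcases Nat.eq_zero_or_pos m with rfl | hm
    · refine Lorth n _ (Or.inr ?_)
      rw [divByMonic_eq_zero_iff monic_X, hP0, degree_one, degree_X]
      decide
    · exact Lorth n _ (Or.inl (by rw [hQdeg m]; omega))
  -- main computation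
  intro n hn
  -- β n * h (n-1) = h n
  have hbeta : β n * h (n - 1) = h n := by
    have hA1 : ∫ x in Set.Ioi (0:ℝ), (X * P (n-1)).eval x * (P n).eval x * w x = h n := by
      refine Lmonic n _ (monic_X.mul (hP (n-1)).1) ?_
      rw [natDegree_mul X_ne_zero (hP (n-1)).1.ne_zero, natDegree_X, (hP (n-1)).2]
      omega
    have heq : ∀ᵐ x ∂(volume.restrict (Set.Ioi (0:ℝ))),
        (X * P (n-1)).eval x * (P n).eval x * w x
        = (P (n+1)).eval x * (P (n-1)).eval x * w x
          + (α n * ((P n).eval x * (P (n-1)).eval x * w x)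
            + β n * ((P (n-1)).eval x * (P (n-1)).eval x * w x)) := by
      refine Filter.Eventually.of_forall fun x => ?_
      rw [eval_mul, eval_X]
      have hx := hrec n hn x
      have hre : x * (P (n-1)).eval x * (P n).eval x * w x
          = (x * (P n).eval x) * ((P (n-1)).eval x * w x) := by ring
      rw [hre, hx]
      ring
    have hstep : ∫ x in Set.Ioi (0:ℝ), (X * P (n-1)).eval x * (P n).eval x * w x
        = β n * h (n-1) := by
      have hgsum : IntegrableOn (fun x => α n * ((P n).eval x * (P (n-1)).eval x * w x)
          + β n * ((P (n-1)).eval x * (P (n-1)).eval x * w x)) (Set.Ioi 0) :=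
        ((hInt2 n (n-1)).const_mul (α n)).add ((hInt2 (n-1) (n-1)).const_mul (β n))
      rw [integral_congr_ae heq,
        integral_add (hIntPoly2 (P (n+1)) (P (n-1))) hgsum]
      rw [integral_add ((hInt2 n (n-1)).const_mul (α n)) ((hInt2 (n-1) (n-1)).const_mul (β n)),
        integral_const_mul, integral_const_mul, horth (n+1) (n-1), horth n (n-1),
        horth (n-1) (n-1), if_neg (by omega), if_neg (by omega), if_pos rfl]
      ring
    linarith [hA1, hstep]
  -- formulas for Rs and rs
  have hRs' : ∀ m : ℕ, 1 ≤ m → Rs m = t / h m * ((P m).eval 0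
      * ∫ y in Set.Ioi (0:ℝ), y⁻¹ * (P m).eval y * w y) := by
    intro m hm
    rw [hRs m]
    congr 1
    have heq : ∀ᵐ y ∂(volume.restrict (Set.Ioi (0:ℝ))),
        y⁻¹ * ((P m).eval y)^2 * w y = y⁻¹ * (P m).eval y * (P m).eval y * w y :=
      Filter.Eventually.of_forall fun y => by ring
    rw [integral_congr_ae heq, Fsplit m m, hQorth m m le_rfl hm, zero_add]
  have hRs0 : Rs 0 = t / h 0 * ((P 0).eval 0
      * ∫ y in Set.Ioi (0:ℝ), y⁻¹ * (P 0).eval y * w y) := by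
    rw [hRs 0, hP0]
    simp
  have hrsn := hrs n hn
  have hrs_b : rs n = t / h (n-1) * ((P (n-1)).eval 0
      * ∫ y in Set.Ioi (0:ℝ), y⁻¹ * (P n).eval y * w y) := by
    rw [hrsn]
    congr 1
    have heq : ∀ᵐ y ∂(volume.restrict (Set.Ioi (0:ℝ))),
        y⁻¹ * (P n).eval y * (P (n-1)).eval y * w y
        = y⁻¹ * (P (n-1)).eval y * (P n).eval y * w y :=
      Filter.Eventually.of_forall fun y => by ring
    rw [integral_congr_ae heq, Fsplit (n-1) n, hQorth (n-1) n (by omega) hn, zero_add]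
  have hrs_a : rs n = t + t / h (n-1) * ((P n).eval 0
      * ∫ y in Set.Ioi (0:ℝ), y⁻¹ * (P (n-1)).eval y * w y) := by
    rw [hrsn, Fsplit n (n-1),
      Lmonic (n-1) _ (hQmonic n hn) (by rw [hQdeg n]), mul_add,
      div_mul_cancel₀ t (ne_of_gt (hpos (n-1)))]
  -- final algebra
  set J1 := ∫ y in Set.Ioi (0:ℝ), y⁻¹ * (P n).eval y * w y with hJ1
  set J0 := ∫ y in Set.Ioi (0:ℝ), y⁻¹ * (P (n-1)).eval y * w y with hJ0
  set c1 := (P n).eval 0 with hc1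
  set c0 := (P (n-1)).eval 0 with hc0
  have hsub : rs n - t = t / h (n-1) * (c1 * J0) := by rw [hrs_a]; ring
  have hRsn : Rs n = t / h n * (c1 * J1) := hRs' n hn
  have hRsn1 : Rs (n-1) = t / h (n-1) * (c0 * J0) := by
    rcases Nat.eq_zero_or_pos (n-1) with he | hp1
    · rw [hc0, hJ0, he]
      exact hRs0
    · exact hRs' (n-1) hp1
  have h1 : h n ≠ 0 := ne_of_gt (hpos n)
  have h0 : h (n-1) ≠ 0 := ne_of_gt (hpos (n-1))
  rw [hsub, hrs_b, hRsn, hRsn1]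
  have hb : β n = h n / h (n-1) := by
    rw [eq_div_iff h0]
    linarith [hbeta]
  rw [hb]
  field_simp
end

section
/- For every n ≥ 1, the recurrence coefficients α_n and β_n satisfy the nonlinear third-order difference equation [(r_n + r_{n+1} + α_n R_n − λ) β_n R_{n−1} + (r_{n−1} + r_n + α_{n−1} R_{n−1} − λ) β_n R_n + t r_n] × [(r_n + r_{n+1} + α_n R_n − λ) β_n R_{n−1} + (r_{n−1} + r_n + α_{n−1} R_{n−1} − λ) β_n R_n − t r_n + λ t] = β_n (2r_n − λ)² (r_n + r_{n+1} + α_n R_n − λ)(r_{n−1} + r_n + α_{n−1} R_{n−1} − λ), where R_n := 3(α_n² + β_n + β_{n+1}) and r_n := 3(α_n + α_{n−1})β_n − n. -/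
open MeasureTheory Polynomial Real Filter


lemma contOn_E (t : ℝ) : ContinuousOn (fun x : ℝ => Real.exp (-x ^ 3 - t / x)) (Set.Ioi 0) := by
  apply Real.continuous_exp.comp_continuousOn
  exact ((continuous_pow 3).neg.continuousOn).sub
    (continuousOn_const.div continuousOn_id (fun x hx => ne_of_gt hx))

lemma contOn_W (lam t : ℝ) : ContinuousOn (fun x : ℝ => x ^ lam * Real.exp (-x ^ 3 - t / x))
    (Set.Ioi 0) := by
  refine ContinuousOn.mul (fun x hx => ?_) (contOn_E t)
  exact (Real.continuousAt_rpow_const x lam (Or.inl (ne_of_gt hx))).continuousWithinAt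

lemma exp_cube_bound (x : ℝ) (hx : 0 < x) :
    Real.exp (-x ^ 3) ≤ Real.exp 1 * Real.exp (-x) := by
  rw [← Real.exp_add]
  apply Real.exp_le_exp.2
  nlinarith [sq_nonneg (x - 1), sq_nonneg x, sq_nonneg (x + 1)]

lemma exp_inv_bound (t : ℝ) (ht : 0 < t) (m : ℕ) (hm : 1 ≤ m) (x : ℝ) (hx : 0 < x) :
    Real.exp (-(t / x)) ≤ ((m : ℝ) * x / t) ^ m := by
  have hmx : 0 < (m : ℝ) * x := by positivity
  have h1 : (t / ((m : ℝ) * x)) ^ m ≤ Real.exp (t / x) := by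
    have h2 : t / ((m : ℝ) * x) ≤ Real.exp (t / ((m : ℝ) * x)) := by
      linarith [Real.add_one_le_exp (t / ((m:ℝ)*x))]
    calc (t / ((m : ℝ) * x)) ^ m ≤ (Real.exp (t / ((m : ℝ) * x))) ^ m :=
          pow_le_pow_left₀ (by positivity) h2 m
      _ = Real.exp ((m : ℝ) * (t / ((m : ℝ) * x))) := by rw [← Real.exp_nat_mul]
      _ = Real.exp (t / x) := by
          congr 1; field_simp
  have hpos : 0 < (t / ((m : ℝ) * x)) ^ m := by positivity
  rw [Real.exp_neg]
  calc (Real.exp (t / x))⁻¹ ≤ ((t / ((m : ℝ) * x)) ^ m)⁻¹ := inv_anti₀ hpos h1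
    _ = ((m : ℝ) * x / t) ^ m := by rw [← inv_pow, inv_div]

lemma core_int (t : ℝ) (ht : 0 < t) (c : ℝ) :
    IntegrableOn (fun x : ℝ => x ^ c * Real.exp (-x ^ 3 - t / x)) (Set.Ioi 0) := by
  set m : ℕ := ⌈|c|⌉₊ + 1 with hm
  have hm1 : 1 ≤ m := by omega
  have hcm : 0 < c + m + 1 := by
    have h1 : |c| ≤ (⌈|c|⌉₊ : ℝ) := Nat.le_ceil _
    have h2 := neg_abs_le c
    push_cast [hm]
    linarith
  set K : ℝ := Real.exp 1 * ((m : ℝ)/t) ^ m with hK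
  have hgint : IntegrableOn
      (fun x : ℝ => K * (Real.exp (-x) * x ^ (c + m + 1 - 1)))
      (Set.Ioi 0) := (Real.GammaIntegral_convergent hcm).const_mul _
  refine Integrable.mono' hgint ((contOn_W c t).aestronglyMeasurable measurableSet_Ioi) ?_
  filter_upwards [ae_restrict_mem measurableSet_Ioi] with x hx
  have hx0 : (0:ℝ) < x := hx
  have hnn : 0 ≤ x ^ c * Real.exp (-x ^ 3 - t / x) := by positivity
  rw [Real.norm_of_nonneg hnn]
  have hsplit : Real.exp (-x ^ 3 - t / x) = Real.exp (-x ^ 3) * Real.exp (-(t / x)) := by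
    rw [← Real.exp_add]; ring_nf
  have hb1 := exp_cube_bound x hx0
  have hb2 := exp_inv_bound t ht m hm1 x hx0
  have hxm : ((m:ℝ) * x / t) ^ m = ((m:ℝ)/t)^m * x ^ (m:ℕ) := by
    rw [← mul_pow]; congr 1; ring
  have hrpow : x ^ (c + m + 1 - 1) = x ^ c * x ^ (m:ℕ) := by
    rw [show c + m + 1 - 1 = c + m by ring, Real.rpow_add hx0, Real.rpow_natCast]
  calc x ^ c * Real.exp (-x ^ 3 - t / x)
      = x ^ c * (Real.exp (-x ^ 3) * Real.exp (-(t / x))) := by rw [hsplit]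
    _ ≤ x ^ c * ((Real.exp 1 * Real.exp (-x)) * (((m:ℝ)/t)^m * x ^ (m:ℕ))) := by
        apply mul_le_mul_of_nonneg_left _ (by positivity)
        rw [← hxm]
        apply mul_le_mul hb1 hb2 (by positivity) (by positivity)
    _ = K * (Real.exp (-x) * x ^ (c + m + 1 - 1)) := by
        rw [hK, hrpow]; ring


noncomputable def Iq (lam t : ℝ) (q : Polynomial ℝ) (k : ℕ) : ℝ :=
  ∫ x in Set.Ioi (0:ℝ), Polynomial.eval x q * (x ^ lam * Real.exp (-x ^ 3 - t / x)) / x ^ k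

lemma intA (lam t : ℝ) (ht : 0 < t) (q : Polynomial ℝ) (k : ℕ) :
    IntegrableOn (fun x : ℝ =>
      Polynomial.eval x q * (x ^ lam * Real.exp (-x ^ 3 - t / x)) / x ^ k) (Set.Ioi 0) := by
  induction q using Polynomial.induction_on' with
  | add p q hp hq =>
    refine IntegrableOn.congr_fun (hp.add hq) (fun x hx => ?_) measurableSet_Ioi
    simp only [Pi.add_apply, Polynomial.eval_add]
    ring
  | monomial i a =>
    refine IntegrableOn.congr_fun ((core_int t ht (lam + i - k)).const_mul a)
      (fun x hx => ?_) measurableSet_Ioi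
    have hx0 : (0:ℝ) < x := hx
    have hr : x ^ (lam + (i:ℝ) - (k:ℝ)) = x ^ lam * x ^ (i:ℕ) / x ^ (k:ℕ) := by
      rw [Real.rpow_sub hx0, Real.rpow_add hx0, Real.rpow_natCast, Real.rpow_natCast]
    rw [hr]
    simp only [Polynomial.eval_monomial]
    ring

lemma Iq_add (lam t : ℝ) (ht : 0 < t) (p q : Polynomial ℝ) (k : ℕ) :
    Iq lam t (p + q) k = Iq lam t p k + Iq lam t q k := by
  unfold Iq
  rw [← integral_add (intA lam t ht p k) (intA lam t ht q k)]
  apply setIntegral_congr_fun measurableSet_Ioi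
  intro x hx
  simp only [Polynomial.eval_add]
  ring

lemma Iq_Cmul (lam t : ℝ) (c : ℝ) (q : Polynomial ℝ) (k : ℕ) :
    Iq lam t (Polynomial.C c * q) k = c * Iq lam t q k := by
  unfold Iq
  rw [← integral_const_mul]
  apply setIntegral_congr_fun measurableSet_Ioi
  intro x hx
  simp only [Polynomial.eval_mul, Polynomial.eval_C]
  ring

lemma Iq_zero (lam t : ℝ) (k : ℕ) : Iq lam t 0 k = 0 := by
  unfold Iq
  simp

lemma Iq_shift (lam t : ℝ) (q : Polynomial ℝ) (k : ℕ) :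
    Iq lam t (Polynomial.X * q) (k + 1) = Iq lam t q k := by
  unfold Iq
  apply setIntegral_congr_fun measurableSet_Ioi
  intro x hx
  have hx0 : (0:ℝ) < x := hx
  have hxne : x ≠ 0 := ne_of_gt hx0
  simp only [Polynomial.eval_mul, Polynomial.eval_X, pow_succ]
  field_simp


-- limit at +infinity
lemma W_top (lam t : ℝ) (ht : 0 < t) (q : Polynomial ℝ) :
    Tendsto (fun x : ℝ => Polynomial.eval x q * (x ^ lam * Real.exp (-x ^ 3 - t / x)))
      atTop (nhds 0) := by
  induction q using Polynomial.induction_on' with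
  | add p q hp hq =>
    have := hp.add hq
    rw [add_zero] at this
    refine this.congr (fun x => ?_)
    simp only [Polynomial.eval_add]; ring
  | monomial i a =>
    set c : ℕ := ⌈lam⌉₊ with hc
    have key : Tendsto (fun x : ℝ => (|a| * Real.exp 1) * (x ^ (i + c) * Real.exp (-x)))
        atTop (nhds 0) := by
      have := (tendsto_pow_mul_exp_neg_atTop_nhds_zero (i + c)).const_mul (|a| * Real.exp 1)
      simpa using this
    apply squeeze_zero_norm' _ key
    filter_upwards [eventually_ge_atTop (1:ℝ)] with x hx1
    have hx0 : (0:ℝ) < x := lt_of_lt_of_le one_pos hx1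
    have h1 : Real.exp (-x ^ 3 - t / x) ≤ Real.exp 1 * Real.exp (-x) := by
      calc Real.exp (-x ^ 3 - t / x) ≤ Real.exp (-x ^ 3) := by
            apply Real.exp_le_exp.2
            have htx : 0 ≤ t / x := by positivity
            linarith
        _ ≤ Real.exp 1 * Real.exp (-x) := exp_cube_bound x hx0
    have h2 : x ^ lam ≤ x ^ (c:ℕ) := by
      rw [← Real.rpow_natCast x c]
      exact Real.rpow_le_rpow_of_exponent_le hx1 (Nat.le_ceil lam)
    have h3 : |Polynomial.eval x ((Polynomial.monomial i) a)| = |a| * x ^ i := by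
      simp only [Polynomial.eval_monomial, abs_mul, abs_pow, abs_of_pos hx0]
    rw [Real.norm_eq_abs, abs_mul, h3, abs_mul]
    rw [abs_of_nonneg (Real.rpow_nonneg hx0.le lam), abs_of_pos (Real.exp_pos _)]
    calc |a| * x ^ i * (x ^ lam * Real.exp (-x ^ 3 - t / x))
        ≤ |a| * x ^ i * (x ^ (c:ℕ) * (Real.exp 1 * Real.exp (-x))) := by
          apply mul_le_mul_of_nonneg_left _ (by positivity)
          exact mul_le_mul h2 h1 (Real.exp_pos _).le (by positivity)
      _ = (|a| * Real.exp 1) * (x ^ (i + c) * Real.exp (-x)) := by rw [pow_add]; ring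

-- limit at 0+ within Ici 0, for the  "if"-extended weight
lemma W_zero (lam t : ℝ) (hlam : -1 < lam) (ht : 0 < t) :
    Tendsto (fun x : ℝ => if x ≤ 0 then 0 else x ^ lam * Real.exp (-x ^ 3 - t / x))
      (nhdsWithin 0 (Set.Ici 0)) (nhds 0) := by
  have hpos : 0 < lam + 2 := by linarith
  have key : Tendsto (fun x : ℝ => ((2:ℝ)/t) ^ 2 * x ^ (lam + 2)) (nhdsWithin 0 (Set.Ici 0))
      (nhds 0) := by
    have h1 : ContinuousAt (fun x : ℝ => x ^ (lam + 2)) 0 :=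
      Real.continuousAt_rpow_const 0 (lam + 2) (Or.inr hpos.le)
    have h2 : Tendsto (fun x : ℝ => x ^ (lam + 2)) (nhdsWithin 0 (Set.Ici 0)) (nhds 0) := by
      have := h1.tendsto.mono_left (nhdsWithin_le_nhds : nhdsWithin (0:ℝ) (Set.Ici 0) ≤ nhds 0)
      rwa [Real.zero_rpow (ne_of_gt hpos)] at this
    simpa using h2.const_mul (((2:ℝ)/t) ^ 2)
  apply squeeze_zero_norm' _ key
  filter_upwards [self_mem_nhdsWithin] with x hx
  rcases le_or_gt x 0 with h | h
  · simp only [if_pos h]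
    have hx0 : x = 0 := le_antisymm h hx
    subst hx0
    rw [Real.zero_rpow (ne_of_gt hpos)]
    simp
  · simp only [if_neg (not_le.2 h)]
    have hb2 := exp_inv_bound t ht 2 (by norm_num) x h
    have h1 : Real.exp (-x ^ 3 - t / x) ≤ ((2:ℝ) * x / t) ^ 2 := by
      calc Real.exp (-x ^ 3 - t / x) ≤ Real.exp (-(t / x)) := by
            apply Real.exp_le_exp.2
            nlinarith [pow_nonneg h.le 3]
        _ ≤ ((2:ℝ) * x / t) ^ 2 := by exact_mod_cast hb2
    have hnorm : ‖x ^ lam * Real.exp (-x ^ 3 - t / x)‖ = x ^ lam * Real.exp (-x ^ 3 - t / x) := by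
      apply Real.norm_of_nonneg; positivity
    rw [hnorm]
    calc x ^ lam * Real.exp (-x ^ 3 - t / x) ≤ x ^ lam * ((2:ℝ) * x / t) ^ 2 := by
          apply mul_le_mul_of_nonneg_left h1 (Real.rpow_nonneg h.le lam)
      _ = ((2:ℝ)/t) ^ 2 * x ^ (lam + 2) := by
          rw [Real.rpow_add h, show (2:ℝ) = ((2:ℕ):ℝ) by norm_cast, Real.rpow_natCast]
          field_simp


-- derivative of p(x) * x^lam * exp(-x^3 - t/x) at x > 0
lemma deriv_W (lam t : ℝ) (p : Polynomial ℝ) (x : ℝ) (hx : 0 < x) :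
    HasDerivAt (fun y : ℝ => Polynomial.eval y p * (y ^ lam * Real.exp (-y ^ 3 - t / y)))
      ((Polynomial.eval x (Polynomial.derivative p)
          + Polynomial.eval x p * (lam / x - 3 * x ^ 2 + t / x ^ 2))
        * (x ^ lam * Real.exp (-x ^ 3 - t / x))) x := by
  have hxne : x ≠ 0 := ne_of_gt hx
  have h1 : HasDerivAt (fun y : ℝ => Polynomial.eval y p)
      (Polynomial.eval x (Polynomial.derivative p)) x := p.hasDerivAt x
  have h2 : HasDerivAt (fun y : ℝ => y ^ lam) (lam * x ^ (lam - 1)) x :=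
    Real.hasDerivAt_rpow_const (Or.inl hxne)
  have h3 : HasDerivAt (fun y : ℝ => -y ^ 3 - t / y) (-(3 * x ^ 2) - t * (-(x ^ 2)⁻¹)) x := by
    have ha : HasDerivAt (fun y : ℝ => y ^ 3) (3 * x ^ 2) x := by
      simpa using hasDerivAt_pow 3 x
    have hb : HasDerivAt (fun y : ℝ => t / y) (t * (-(x ^ 2)⁻¹)) x := by
      simpa [div_eq_mul_inv] using (hasDerivAt_inv hxne).const_mul t
    exact ha.neg.sub hb
  have h4 : HasDerivAt (fun y : ℝ => Real.exp (-y ^ 3 - t / y))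
      (Real.exp (-x ^ 3 - t / x) * (-(3 * x ^ 2) - t * (-(x ^ 2)⁻¹))) x := by
    simpa [mul_comm] using h3.exp
  have h5 := (h2.mul h4).const_mul 1
  have h6 := h1.mul (h2.mul h4)
  refine h6.congr_deriv ?_
  have hxl : x ^ (lam - 1) = x ^ lam / x := Real.rpow_sub_one hxne lam
  rw [hxl, Pi.mul_apply]
  field_simp
  ring

-- the Pearson relation
lemma pearson (lam t : ℝ) (hlam : -1 < lam) (ht : 0 < t) (p : Polynomial ℝ) :
    Iq lam t (Polynomial.derivative p) 0 + lam * Iq lam t p 1 + t * Iq lam t p 2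
      = 3 * Iq lam t (Polynomial.X ^ 2 * p) 0 := by
  set W : ℝ → ℝ := fun x => x ^ lam * Real.exp (-x ^ 3 - t / x) with hW
  set H : ℝ → ℝ := fun x => if x ≤ 0 then 0 else W x with hH
  set F : ℝ → ℝ := fun x => Polynomial.eval x p * H x with hF
  set G : ℝ → ℝ := fun x => (Polynomial.eval x (Polynomial.derivative p)
      + Polynomial.eval x p * (lam / x - 3 * x ^ 2 + t / x ^ 2)) * W x with hG
  have hGint : IntegrableOn G (Set.Ioi 0) := by
    have h1 := intA lam t ht (Polynomial.derivative p) 0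
    have h2 := (intA lam t ht p 1).const_mul lam
    have h3 := (intA lam t ht p 2).const_mul t
    have h4 := (intA lam t ht (Polynomial.X ^ 2 * p) 0).const_mul (3:ℝ)
    refine IntegrableOn.congr_fun (((h1.add h2).add h3).sub h4) (fun x hx => ?_) measurableSet_Ioi
    have hx0 : (0:ℝ) < x := hx
    have hxne : x ≠ 0 := ne_of_gt hx0
    simp only [Pi.add_apply, Pi.sub_apply, hG, Polynomial.eval_mul, Polynomial.eval_pow,
      Polynomial.eval_X, pow_zero, pow_one, div_one]
    rw [hW]
    dsimp only
    generalize Real.exp (-x ^ 3 - t / x) = E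
    field_simp
    ring
  have hcont : ContinuousWithinAt F (Set.Ici 0) 0 := by
    have hH0 : Tendsto H (nhdsWithin 0 (Set.Ici 0)) (nhds 0) := W_zero lam t hlam ht
    have hp : Tendsto (fun x : ℝ => Polynomial.eval x p) (nhdsWithin 0 (Set.Ici 0))
        (nhds (Polynomial.eval 0 p)) :=
      (p.continuousAt).continuousWithinAt
    have := hp.mul hH0
    rw [mul_zero] at this
    have hF0 : F 0 = 0 := by simp [hF, hH]
    unfold ContinuousWithinAt
    rw [hF0]
    exact this
  have hderiv : ∀ x ∈ Set.Ioi (0:ℝ), HasDerivAt F (G x) x := by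
    intro x hx
    have hx0 : (0:ℝ) < x := hx
    have heq : F =ᶠ[nhds x] fun y => Polynomial.eval y p * W y := by
      filter_upwards [IsOpen.mem_nhds isOpen_Ioi hx] with y hy
      simp [hF, hH, not_le.2 (show (0:ℝ) < y from hy)]
    exact ((deriv_W lam t p x hx0).congr_of_eventuallyEq heq)
  have htop : Tendsto F atTop (nhds 0) := by
    have := W_top lam t ht p
    refine this.congr' ?_
    filter_upwards [eventually_gt_atTop (0:ℝ)] with x hx
    simp [hF, hH, hW, not_le.2 hx]
  have hFTC : ∫ x in Set.Ioi (0:ℝ), G x = 0 - F 0 :=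
    MeasureTheory.integral_Ioi_of_hasDerivAt_of_tendsto hcont hderiv hGint htop
  have hF0 : F 0 = 0 := by simp [hF, hH]
  rw [hF0, sub_zero] at hFTC
  -- split the integral
  have hsplit : ∫ x in Set.Ioi (0:ℝ), G x
      = Iq lam t (Polynomial.derivative p) 0 + lam * Iq lam t p 1 + t * Iq lam t p 2
        - 3 * Iq lam t (Polynomial.X ^ 2 * p) 0 := by
    have h1 := intA lam t ht (Polynomial.derivative p) 0
    have h2 := (intA lam t ht p 1).const_mul lam
    have h3 := (intA lam t ht p 2).const_mul t
    have h4 := (intA lam t ht (Polynomial.X ^ 2 * p) 0).const_mul (3:ℝ)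
    have e1 : ∫ x in Set.Ioi (0:ℝ), G x = ∫ x in Set.Ioi (0:ℝ),
        ((fun x => Polynomial.eval x (Polynomial.derivative p) * W x / x ^ 0) x
          + (fun x => lam * (Polynomial.eval x p * W x / x ^ 1)) x
          + (fun x => t * (Polynomial.eval x p * W x / x ^ 2)) x
          - (fun x => (3:ℝ) * (Polynomial.eval x (Polynomial.X ^ 2 * p) * W x / x ^ 0)) x) := by
      apply setIntegral_congr_fun measurableSet_Ioi
      intro x hx
      have hx0 : (0:ℝ) < x := hx
      have hxne : x ≠ 0 := ne_of_gt hx0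
      simp only [hG, Polynomial.eval_mul, Polynomial.eval_pow, Polynomial.eval_X,
        pow_zero, pow_one, div_one]
      rw [hW]
      dsimp only
      generalize Real.exp (-x ^ 3 - t / x) = E
      field_simp
      ring
    rw [e1, integral_sub (by exact (h1.add h2).add h3) (by exact h4),
        integral_add (by exact h1.add h2) (by exact h3),
        integral_add (by exact h1) (by exact h2)]
    simp only [integral_const_mul]
    unfold Iq
    norm_num [hW]
  rw [hFTC] at hsplit
  linarith




lemma Lcoeff (lam t : ℝ) (ht : 0 < t) (P : ℕ → Polynomial ℝ) (h : ℕ → ℝ)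
    (hP : ∀ n, (P n).Monic ∧ (P n).natDegree = n) (hP0 : P 0 = 1)
    (hIo : ∀ i j, Iq lam t (P i * P j) 0 = if i = j then h j else 0) :
    ∀ (m : ℕ) (q : Polynomial ℝ), q.natDegree ≤ m → Iq lam t (q * P m) 0 = q.coeff m * h m := by
  have key : ∀ (d : ℕ) (q : Polynomial ℝ), q.natDegree ≤ d → ∀ m, d ≤ m →
      Iq lam t (q * P m) 0 = q.coeff m * h m := by
    intro d
    induction d with
    | zero =>
      intro q hq m hm
      have h0 : q.natDegree = 0 := le_antisymm hq (Nat.zero_le _)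
      obtain ⟨a, rfl⟩ := Polynomial.natDegree_eq_zero.mp h0
      rw [Iq_Cmul lam t]
      have h2 : Iq lam t (P m) 0 = if 0 = m then h m else 0 := by
        have := hIo 0 m
        rwa [hP0, one_mul] at this
      rw [h2]
      by_cases hm0 : m = 0
      · subst hm0; simp
      · simp [Polynomial.coeff_C, hm0, Ne.symm hm0]
    | succ d ih =>
      intro q hq m hm
      set c := q.coeff (d+1) with hc
      set q' := q - Polynomial.C c * P (d+1) with hq'
      have hPd : (P (d+1)).coeff (d+1) = 1 := by
        have := (hP (d+1)).1.coeff_natDegree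
        rwa [(hP (d+1)).2] at this
      have hq'deg : q'.natDegree ≤ d := by
        apply Polynomial.natDegree_le_iff_coeff_eq_zero.2
        intro N hN
        rcases Nat.lt_or_ge (d+1) N with h1 | h1
        · have e1 : q.coeff N = 0 := Polynomial.natDegree_le_iff_coeff_eq_zero.1 hq N h1
          have e2 : (P (d+1)).coeff N = 0 :=
            Polynomial.coeff_eq_zero_of_natDegree_lt (by rw [(hP (d+1)).2]; exact h1)
          simp [hq', e1, e2]
        · have hN1 : N = d + 1 := le_antisymm h1 hN
          subst hN1
          simp [hq', hPd, hc]
      have hsplit : q = q' + Polynomial.C c * P (d+1) := by rw [hq']; ring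
      have e3 : Iq lam t (q * P m) 0
          = Iq lam t (q' * P m) 0 + c * Iq lam t (P (d+1) * P m) 0 := by
        conv_lhs => rw [hsplit]
        rw [show (q' + Polynomial.C c * P (d+1)) * P m
            = q' * P m + Polynomial.C c * (P (d+1) * P m) by ring]
        rw [Iq_add lam t ht, Iq_Cmul lam t]
      rw [e3, ih q' hq'deg m (le_trans (Nat.le_succ d) hm), hIo (d+1) m]
      have e4 : q.coeff m = q'.coeff m + c * (P (d+1)).coeff m := by
        rw [hq']
        simp only [Polynomial.coeff_sub, Polynomial.coeff_C_mul]
        ring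
      rcases eq_or_ne (d+1) m with h5 | h5
      · subst h5
        rw [if_pos rfl, e4, hPd]
        ring
      · rw [if_neg h5, e4,
          Polynomial.coeff_eq_zero_of_natDegree_lt (by rw [(hP (d+1)).2]; omega : (P (d+1)).natDegree < m)]
        ring
  intro m q hq
  exact key m q hq m le_rfl




theorem stmt_11
    (lam t : ℝ) (hlam : -1 < lam) (ht : 0 < t)
    (w : ℝ → ℝ)
    (hw : ∀ x : ℝ, 0 < x → w x = x ^ lam * Real.exp (-x ^ 3 - t / x))
    (P : ℕ → Polynomial ℝ) (h : ℕ → ℝ) (α β : ℕ → ℝ)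
    (hP : ∀ n, (P n).Monic ∧ (P n).natDegree = n)
    (hpos : ∀ n, 0 < h n)
    (horth : ∀ m n, ∫ x in Set.Ioi (0 : ℝ),
        (P m).eval x * (P n).eval x * w x = if m = n then h n else 0)
    (hP0 : P 0 = 1)
    (hrec : ∀ n, 1 ≤ n → ∀ x : ℝ, x * (P n).eval x
        = (P (n + 1)).eval x + α n * (P n).eval x + β n * (P (n - 1)).eval x)
    (hrec0 : ∀ x : ℝ, x * (P 0).eval x = (P 1).eval x + α 0 * (P 0).eval x)
    (hβ0 : β 0 = 0)
    (R : ℕ → ℝ) (hR : ∀ m : ℕ, R m = 3 * ((α m) ^ 2 + β m + β (m + 1)))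
    (r : ℕ → ℝ)
    (hr : ∀ m : ℕ, r m = 3 * (α m + α (m - 1)) * β m - (m : ℝ))
    : ∀ n : ℕ, 1 ≤ n →
      ((r n + r (n + 1) + α n * R n - lam) * β n * R (n - 1)
          + (r (n - 1) + r n + α (n - 1) * R (n - 1) - lam) * β n * R n + t * r n)
        * ((r n + r (n + 1) + α n * R n - lam) * β n * R (n - 1)
          + (r (n - 1) + r n + α (n - 1) * R (n - 1) - lam) * β n * R n - t * r n + lam * t)
      = β n * (2 * r n - lam) ^ 2 * (r n + r (n + 1) + α n * R n - lam)
          * (r (n - 1) + r n + α (n - 1) * R (n - 1) - lam) := by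
  -- transfer orthogonality to Iq
  -- transfer orthogonality to Iq
  have hIo : ∀ i j : ℕ, Iq lam t (P i * P j) 0 = if i = j then h j else 0 := by
    intro i j
    rw [← horth i j]
    unfold Iq
    apply setIntegral_congr_fun measurableSet_Ioi
    intro x hx
    dsimp only
    rw [hw x hx, Polynomial.eval_mul]
    simp
  have Lco := Lcoeff lam t ht P h hP hP0 hIo
  have hmc : ∀ m : ℕ, (P m).coeff m = 1 := by
    intro m
    have := (hP m).1.coeff_natDegree
    rwa [(hP m).2] at this
  have hc0 : ∀ m k : ℕ, m < k → (P m).coeff k = 0 := by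
    intro m k hk
    exact Polynomial.coeff_eq_zero_of_natDegree_lt (by rw [(hP m).2]; exact hk)
  have hrecP : ∀ m : ℕ, (Polynomial.X : Polynomial ℝ) * P m
      = P (m+1) + Polynomial.C (α m) * P m + Polynomial.C (β m) * P (m-1) := by
    intro m
    apply Polynomial.funext
    intro x
    simp only [Polynomial.eval_mul, Polynomial.eval_add, Polynomial.eval_X, Polynomial.eval_C]
    rcases Nat.eq_zero_or_pos m with rfl | hm
    · rw [hβ0]
      simpa using hrec0 x
    · exact hrec m hm x
  have Lexp : ∀ m j k : ℕ, Iq lam t ((Polynomial.X * P m) * P j) k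
      = Iq lam t (P (m+1) * P j) k + α m * Iq lam t (P m * P j) k
        + β m * Iq lam t (P (m-1) * P j) k := by
    intro m j k
    have e : (Polynomial.X * P m) * P j
        = (P (m+1) * P j + Polynomial.C (α m) * (P m * P j))
          + Polynomial.C (β m) * (P (m-1) * P j) := by
      rw [hrecP m]; ring
    rw [e, Iq_add lam t ht, Iq_add lam t ht, Iq_Cmul lam t, Iq_Cmul lam t]
  have hcomm : ∀ (a b : Polynomial ℝ) (k : ℕ), Iq lam t (a * b) k = Iq lam t (b * a) k := by
    intro a b k; rw [mul_comm]
  have Ldec : ∀ (a b : Polynomial ℝ) (k : ℕ),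
      Iq lam t (a * b) (k+1) = Iq lam t (a.divX * b) k + a.coeff 0 * Iq lam t b (k+1) := by
    intro a b k
    have e : a * b = Polynomial.X * (a.divX * b) + Polynomial.C (a.coeff 0) * b := by
      conv_lhs => rw [← Polynomial.X_mul_divX_add a]
      ring
    rw [e, Iq_add lam t ht, Iq_shift, Iq_Cmul]
  -- O5 : h m = β m * h (m-1)
  have O5 : ∀ m : ℕ, 1 ≤ m → h m = β m * h (m-1) := by
    intro m hm
    have w1 : Iq lam t ((Polynomial.X * P m) * P (m-1)) 0 = β m * h (m-1) := by
      rw [Lexp m (m-1) 0, hIo, hIo, hIo]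
      rw [if_neg (by omega), if_neg (by omega), if_pos rfl]
      ring
    have w2 : Iq lam t ((Polynomial.X * P (m-1)) * P m) 0 = h m := by
      rw [Lexp (m-1) m 0]
      rw [show m - 1 + 1 = m by omega]
      rw [hIo, hIo, hIo]
      rw [if_pos rfl, if_neg (by omega), if_neg (by omega)]
      ring
    rw [← w1, ← w2]
    rw [show (Polynomial.X * P (m-1)) * P m = (Polynomial.X * P m) * P (m-1) by ring]
  -- E3 and E3'
  have E3 : ∀ m : ℕ, Iq lam t (P (m+1) * P m) 1 + α m * Iq lam t (P m * P m) 1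
      + β m * Iq lam t (P m * P (m-1)) 1 = h m := by
    intro m
    have w1 := Lexp m m 1
    rw [hcomm (P (m-1)) (P m)] at w1
    have w2 : Iq lam t ((Polynomial.X * P m) * P m) 1 = h m := by
      rw [show (Polynomial.X * P m) * P m = Polynomial.X * (P m * P m) by ring]
      rw [show (1:ℕ) = 0 + 1 by rfl, Iq_shift lam t]
      have := hIo m m
      rwa [if_pos rfl] at this
    rw [w1] at w2
    exact w2
  have E3' : ∀ m : ℕ, Iq lam t (P (m+1) * P m) 2 + α m * Iq lam t (P m * P m) 2
      + β m * Iq lam t (P m * P (m-1)) 2 = Iq lam t (P m * P m) 1 := by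
    intro m
    have w1 := Lexp m m 2
    rw [hcomm (P (m-1)) (P m)] at w1
    have w2 : Iq lam t ((Polynomial.X * P m) * P m) 2 = Iq lam t (P m * P m) 1 := by
      rw [show (Polynomial.X * P m) * P m = Polynomial.X * (P m * P m) by ring]
      rw [show (2:ℕ) = 1 + 1 by rfl, Iq_shift lam t]
    rw [w1] at w2
    exact w2
  -- D1
  have D1 : ∀ m : ℕ, lam * Iq lam t (P m * P m) 1 + t * Iq lam t (P m * P m) 2
      = R m * h m := by
    intro m
    have hder : Iq lam t (Polynomial.derivative (P m * P m)) 0 = 0 := by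
      rw [Polynomial.derivative_mul, Iq_add lam t ht, hcomm (P m) (Polynomial.derivative (P m))]
      have hdeg : (Polynomial.derivative (P m)).natDegree ≤ m :=
        le_trans (Polynomial.natDegree_derivative_le _) (by rw [(hP m).2]; omega)
      have e := Lco m (Polynomial.derivative (P m)) hdeg
      have e2 : (Polynomial.derivative (P m)).coeff m = 0 := by
        rw [Polynomial.coeff_derivative, hc0 m (m+1) (by omega)]; ring
      rw [e2] at e
      rw [e]; ring
    have hK : Iq lam t (Polynomial.X^2 * (P m * P m)) 0
        = h (m+1) + α m * α m * h m + β m * β m * h (m-1) := by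
      have e : Polynomial.X^2 * (P m * P m) = (Polynomial.X * P m) * (Polynomial.X * P m) := by
        ring
      rw [e, hrecP m]
      have e2 : (P (m+1) + Polynomial.C (α m) * P m + Polynomial.C (β m) * P (m-1)) *
                (P (m+1) + Polynomial.C (α m) * P m + Polynomial.C (β m) * P (m-1))
          = ((((((((P (m+1) * P (m+1))
            + Polynomial.C (α m) * (P (m+1) * P m)) + Polynomial.C (β m) * (P (m+1) * P (m-1)))
            + Polynomial.C (α m) * (P m * P (m+1))) + Polynomial.C (α m) * (Polynomial.C (α m) * (P m * P m)))
            + Polynomial.C (α m) * (Polynomial.C (β m) * (P m * P (m-1))))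
            + Polynomial.C (β m) * (P (m-1) * P (m+1)))
            + Polynomial.C (β m) * (Polynomial.C (α m) * (P (m-1) * P m)))
            + Polynomial.C (β m) * (Polynomial.C (β m) * (P (m-1) * P (m-1))) := by
        ring
      rw [e2]
      simp only [Iq_add lam t ht, Iq_Cmul lam t, hIo]
      rcases Nat.eq_zero_or_pos m with rfl | hm
      · simp [hβ0]; ring
      · rw [if_neg (by omega : ¬ m + 1 = m), if_neg (by omega : ¬ m + 1 = m - 1),
          if_neg (by omega : ¬ m = m + 1), if_neg (by omega : ¬ m = m - 1),
          if_neg (by omega : ¬ m - 1 = m + 1), if_neg (by omega : ¬ m - 1 = m)]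
        simp only [if_true]
        ring
    have hp := pearson lam t hlam ht (P m * P m)
    rw [hder, hK] at hp
    have o5p := O5 (m+1) (by omega)
    rw [Nat.add_sub_cancel] at o5p
    rcases Nat.eq_zero_or_pos m with rfl | hm
    · rw [hR 0]
      simp only [hβ0] at *
      linear_combination hp + 3 * o5p
    · have o5 := O5 m hm
      rw [hR m]
      linear_combination hp + 3 * o5p - 3 * β m * o5
  -- D2
  have D2 : ∀ m : ℕ, 1 ≤ m → lam * Iq lam t (P m * P (m-1)) 1 + t * Iq lam t (P m * P (m-1)) 2
      = r m * h (m-1) := by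
    intro m hm
    have hder : Iq lam t (Polynomial.derivative (P m * P (m-1))) 0 = (m:ℝ) * h (m-1) := by
      rw [Polynomial.derivative_mul, Iq_add lam t ht,
        hcomm (P m) (Polynomial.derivative (P (m-1)))]
      have hdeg1 : (Polynomial.derivative (P m)).natDegree ≤ m - 1 :=
        le_trans (Polynomial.natDegree_derivative_le _) (by rw [(hP m).2])
      have e1 := Lco (m-1) (Polynomial.derivative (P m)) hdeg1
      have c1 : (Polynomial.derivative (P m)).coeff (m-1) = (m:ℝ) := by
        rw [Polynomial.coeff_derivative, show m - 1 + 1 = m by omega, hmc m, Nat.cast_sub hm]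
        norm_num
      have hdeg2 : (Polynomial.derivative (P (m-1))).natDegree ≤ m :=
        le_trans (Polynomial.natDegree_derivative_le _) (by rw [(hP (m-1)).2]; omega)
      have e2 := Lco m (Polynomial.derivative (P (m-1))) hdeg2
      have c2 : (Polynomial.derivative (P (m-1))).coeff m = 0 := by
        rw [Polynomial.coeff_derivative, hc0 (m-1) (m+1) (by omega)]; ring
      rw [e1, e2, c1, c2]; ring
    have hK : Iq lam t (Polynomial.X^2 * (P m * P (m-1))) 0
        = α m * h m + β m * (α (m-1) * h (m-1)) := by
      have e : Polynomial.X^2 * (P m * P (m-1)) = (Polynomial.X * P m) * (Polynomial.X * P (m-1)) := by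
        ring
      have hr2 := hrecP (m-1)
      rw [show m - 1 + 1 = m by omega] at hr2
      rw [e, hrecP m, hr2]
      have e2 : (P (m+1) + Polynomial.C (α m) * P m + Polynomial.C (β m) * P (m-1)) *
                (P m + Polynomial.C (α (m-1)) * P (m-1) + Polynomial.C (β (m-1)) * P (m-1-1))
          = ((((((((P (m+1) * P m)
            + Polynomial.C (α (m-1)) * (P (m+1) * P (m-1)))
            + Polynomial.C (β (m-1)) * (P (m+1) * P (m-1-1)))
            + Polynomial.C (α m) * (P m * P m))
            + Polynomial.C (α m) * (Polynomial.C (α (m-1)) * (P m * P (m-1))))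
            + Polynomial.C (α m) * (Polynomial.C (β (m-1)) * (P m * P (m-1-1))))
            + Polynomial.C (β m) * (P (m-1) * P m))
            + Polynomial.C (β m) * (Polynomial.C (α (m-1)) * (P (m-1) * P (m-1))))
            + Polynomial.C (β m) * (Polynomial.C (β (m-1)) * (P (m-1) * P (m-1-1))) := by
        ring
      rw [e2]
      simp only [Iq_add lam t ht, Iq_Cmul lam t, hIo]
      rcases eq_or_lt_of_le hm with hm1 | hm2
      · -- m = 1
        have : m = 1 := hm1.symm
        subst this
        norm_num [hβ0]
      · -- m ≥ 2
        rw [if_neg (by omega : ¬ m + 1 = m), if_neg (by omega : ¬ m + 1 = m - 1),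
          if_neg (by omega : ¬ m + 1 = m - 1 - 1),
          if_neg (by omega : ¬ m = m - 1), if_neg (by omega : ¬ m = m - 1 - 1),
          if_neg (by omega : ¬ m - 1 = m), if_neg (by omega : ¬ m - 1 = m - 1 - 1)]
        simp only [if_true]
        ring
    have hp := pearson lam t hlam ht (P m * P (m-1))
    rw [hder, hK] at hp
    have o5 := O5 m hm
    rw [hr m]
    linear_combination hp + 3 * α m * o5
  -- O-lemmas
  have hdivdeg : ∀ m : ℕ, (P m).divX.natDegree = m - 1 := by
    intro m
    rw [Polynomial.natDegree_divX_eq_natDegree_tsub_one, (hP m).2]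
  have O1 : ∀ m : ℕ, Iq lam t (P m * P m) 1 = (P m).coeff 0 * Iq lam t (P m) 1 := by
    intro m
    have ld := Ldec (P m) (P m) 0
    norm_num at ld
    rw [ld, Lco m _ (by rw [hdivdeg]; omega), Polynomial.coeff_divX, hc0 m (m+1) (by omega)]
    ring
  have O2a : ∀ m : ℕ, 1 ≤ m → Iq lam t (P m * P (m-1)) 1
      = h (m-1) + (P m).coeff 0 * Iq lam t (P (m-1)) 1 := by
    intro m hm
    have ld := Ldec (P m) (P (m-1)) 0
    norm_num at ld
    rw [ld, Lco (m-1) _ (by rw [hdivdeg]), Polynomial.coeff_divX, show m - 1 + 1 = m by omega,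
      hmc m]
    ring
  have O2b : ∀ m : ℕ, 1 ≤ m → Iq lam t (P m * P (m-1)) 1
      = (P (m-1)).coeff 0 * Iq lam t (P m) 1 := by
    intro m hm
    rw [hcomm]
    have ld := Ldec (P (m-1)) (P m) 0
    norm_num at ld
    rw [ld, Lco m _ (by rw [hdivdeg]; omega), Polynomial.coeff_divX, hc0 (m-1) (m+1) (by omega)]
    ring
  have O3 : ∀ m : ℕ, Iq lam t (P m * P m) 2
      = (P m).coeff 0 * Iq lam t (P m) 2 + (P m).coeff 1 * Iq lam t (P m) 1 := by
    intro m
    have ld1 := Ldec (P m) (P m) 1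
    norm_num at ld1
    have ld2 := Ldec (P m).divX (P m) 0
    norm_num at ld2
    have hdd : (P m).divX.divX.natDegree ≤ m := by
      rw [Polynomial.natDegree_divX_eq_natDegree_tsub_one, hdivdeg]; omega
    rw [ld1, ld2, Lco m _ hdd, Polynomial.coeff_divX, Polynomial.coeff_divX,
      hc0 m (m+1+1) (by omega)]
    ring
  have O4a : ∀ m : ℕ, 1 ≤ m → Iq lam t (P m * P (m-1)) 2
      = (P m).coeff 0 * Iq lam t (P (m-1)) 2 + (P m).coeff 1 * Iq lam t (P (m-1)) 1 := by
    intro m hm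
    have ld1 := Ldec (P m) (P (m-1)) 1
    norm_num at ld1
    have ld2 := Ldec (P m).divX (P (m-1)) 0
    norm_num at ld2
    have hdd : (P m).divX.divX.natDegree ≤ m - 1 := by
      rw [Polynomial.natDegree_divX_eq_natDegree_tsub_one, hdivdeg]; omega
    rw [ld1, ld2, Lco (m-1) _ hdd, Polynomial.coeff_divX, Polynomial.coeff_divX,
      hc0 m (m-1+1+1) (by omega)]
    ring
  have O4b : ∀ m : ℕ, 1 ≤ m → Iq lam t (P m * P (m-1)) 2
      = (P (m-1)).coeff 0 * Iq lam t (P m) 2 + (P (m-1)).coeff 1 * Iq lam t (P m) 1 := by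
    intro m hm
    rw [hcomm]
    have ld1 := Ldec (P (m-1)) (P m) 1
    norm_num at ld1
    have ld2 := Ldec (P (m-1)).divX (P m) 0
    norm_num at ld2
    have hdd : (P (m-1)).divX.divX.natDegree ≤ m := by
      rw [Polynomial.natDegree_divX_eq_natDegree_tsub_one, hdivdeg]; omega
    rw [ld1, ld2, Lco m _ hdd, Polynomial.coeff_divX, Polynomial.coeff_divX,
      hc0 (m-1) (m+1+1) (by omega)]
    ring
  -- Step 1: S_m * h m = t * u m
  have Sh : ∀ m : ℕ, (r m + r (m+1) + α m * R m - lam) * h m = t * Iq lam t (P m * P m) 1 := by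
    intro m
    have d2p := D2 (m+1) (by omega)
    rw [Nat.add_sub_cancel] at d2p
    have e3 := E3 m
    have e3' := E3' m
    have d1 := D1 m
    rcases Nat.eq_zero_or_pos m with rfl | hm
    · have r0 : r 0 = 0 := by rw [hr 0]; simp [hβ0]
      linear_combination (-1:ℝ) * d2p + lam * e3 + t * e3' - α 0 * d1 + h 0 * r0
        - (lam * Iq lam t (P 0 * P (0-1)) 1 + t * Iq lam t (P 0 * P (0-1)) 2) * hβ0
    · have d2 := D2 m hm
      have o5 := O5 m hm
      linear_combination (-1:ℝ) * d2p - β m * d2 + lam * e3 + t * e3' - α m * d1 + r m * o5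
  -- final assembly
  intro n hn
  have hn1 : n - 1 + 1 = n := by omega
  have hSh := Sh n
  have hTh := Sh (n-1)
  rw [hn1] at hTh
  have hO5 := O5 n hn
  have hA := O2b n hn
  have hB := O2a n hn
  have hCa := O4a n hn
  have hCb := O4b n hn
  have hD := O1 n
  have hD' := O1 (n-1)
  have hE := O3 n
  have hE' := O3 (n-1)
  have hG1 : Iq lam t (P n * P (n-1)) 1 * (Iq lam t (P n * P (n-1)) 1 - h (n-1))
      = Iq lam t (P n * P n) 1 * Iq lam t (P (n-1) * P (n-1)) 1 := by
    linear_combination (Iq lam t (P n * P (n-1)) 1 - h (n-1)) * hA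
      + ((P (n-1)).coeff 0 * Iq lam t (P n) 1) * hB
      - Iq lam t (P (n-1) * P (n-1)) 1 * hD
      - ((P n).coeff 0 * Iq lam t (P n) 1) * hD'
  have hG2 : (2 * Iq lam t (P n * P (n-1)) 1 - h (n-1)) * Iq lam t (P n * P (n-1)) 2
      = Iq lam t (P n * P n) 1 * Iq lam t (P (n-1) * P (n-1)) 2
        + Iq lam t (P (n-1) * P (n-1)) 1 * Iq lam t (P n * P n) 2 := by
    linear_combination (Iq lam t (P n * P (n-1)) 2) * hA
      + ((P (n-1)).coeff 0 * Iq lam t (P n) 1) * hCa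
      + Iq lam t (P n * P (n-1)) 2 * hB
      + ((P n).coeff 0 * Iq lam t (P (n-1)) 1) * hCb
      - Iq lam t (P (n-1) * P (n-1)) 2 * hD
      - ((P n).coeff 0 * Iq lam t (P n) 1) * hE'
      - Iq lam t (P n * P n) 2 * hD'
      - ((P (n-1)).coeff 0 * Iq lam t (P (n-1)) 1) * hE
  have hd2 := D2 n hn
  have hd1 := D1 n
  have hd1' := D1 (n-1)
  have hE7 : (2 * r n - lam) * Iq lam t (P n * P (n-1)) 1 - r n * h (n-1)
      = Iq lam t (P n * P n) 1 * R (n-1) + β n * Iq lam t (P (n-1) * P (n-1)) 1 * R n := by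
    have key : ((2 * r n - lam) * Iq lam t (P n * P (n-1)) 1 - r n * h (n-1)) * h (n-1)
        = (Iq lam t (P n * P n) 1 * R (n-1)
            + β n * Iq lam t (P (n-1) * P (n-1)) 1 * R n) * h (n-1) := by
      linear_combination (-(2 * Iq lam t (P n * P (n-1)) 1 - h (n-1))) * hd2
        + Iq lam t (P (n-1) * P (n-1)) 1 * hd1
        + Iq lam t (P n * P n) 1 * hd1'
        + (Iq lam t (P (n-1) * P (n-1)) 1 * R n) * hO5
        + (2*lam) * hG1 + t * hG2
    exact mul_right_cancel₀ (ne_of_gt (hpos (n-1))) key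
  have hX : ((r n + r (n + 1) + α n * R n - lam) * β n * R (n - 1)
        + (r (n - 1) + r n + α (n - 1) * R (n - 1) - lam) * β n * R n + t * r n) * h (n-1)
      = t * (2 * r n - lam) * Iq lam t (P n * P (n-1)) 1 := by
    linear_combination (R (n-1)) * hSh + (β n * R n) * hTh
      - ((r n + r (n+1) + α n * R n - lam) * R (n-1)) * hO5 - t * hE7
  have hY : ((r n + r (n + 1) + α n * R n - lam) * β n * R (n - 1)
        + (r (n - 1) + r n + α (n - 1) * R (n - 1) - lam) * β n * R n - t * r n + lam * t) * h (n-1)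
      = t * (2 * r n - lam) * (Iq lam t (P n * P (n-1)) 1 - h (n-1)) := by
    linear_combination (R (n-1)) * hSh + (β n * R n) * hTh
      - ((r n + r (n+1) + α n * R n - lam) * R (n-1)) * hO5 - t * hE7
  have hRR : β n * (2 * r n - lam)^2 * (r n + r (n + 1) + α n * R n - lam)
        * (r (n - 1) + r n + α (n - 1) * R (n - 1) - lam) * h (n-1)^2
      = t^2 * (2 * r n - lam)^2 * (Iq lam t (P n * P n) 1 * Iq lam t (P (n-1) * P (n-1)) 1) := by
    linear_combination ((2*r n - lam)^2 * t * Iq lam t (P (n-1) * P (n-1)) 1) * hSh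
      + ((2*r n - lam)^2 * (r n + r (n+1) + α n * R n - lam) * h n) * hTh
      - ((2*r n - lam)^2 * (r n + r (n+1) + α n * R n - lam)
          * (r (n-1) + r n + α (n-1) * R (n-1) - lam) * h (n-1)) * hO5
  have main : (((r n + r (n + 1) + α n * R n - lam) * β n * R (n - 1)
          + (r (n - 1) + r n + α (n - 1) * R (n - 1) - lam) * β n * R n + t * r n)
        * ((r n + r (n + 1) + α n * R n - lam) * β n * R (n - 1)
          + (r (n - 1) + r n + α (n - 1) * R (n - 1) - lam) * β n * R n - t * r n + lam * t))
        * h (n-1)^2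
      = (β n * (2 * r n - lam) ^ 2 * (r n + r (n + 1) + α n * R n - lam)
          * (r (n - 1) + r n + α (n - 1) * R (n - 1) - lam)) * h (n-1)^2 := by
    linear_combination (((r n + r (n + 1) + α n * R n - lam) * β n * R (n - 1)
          + (r (n - 1) + r n + α (n - 1) * R (n - 1) - lam) * β n * R n - t * r n + lam * t)
          * h (n-1)) * hX
      + (t * (2 * r n - lam) * Iq lam t (P n * P (n-1)) 1) * hY
      + (t^2 * (2 * r n - lam)^2) * hG1 - hRR
  have hne : h (n-1)^2 ≠ 0 := pow_ne_zero 2 (ne_of_gt (hpos (n-1)))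
  exact mul_right_cancel₀ hne main
end
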